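/- arXiv:2003.12360 — 5 statements merged into one kernel-verified Lean document; each statement's English description precedes it below -/
import Mathlib

section
/- For a metric space X, trasdim X ≤ n (for n ∈ ℕ) if and only if asdim X ≤ n, where trasdim X = Ord A(X) with A(X) = {σ ∈ FinN : there are no uniformly bounded families U_i, i ∈ σ, such that each U_i is i-disjoint and ⋃_{i∈σ} U_i covers X}. -/
open Set Metric EMetric
open scoped ENNReal NNReal

noncomputable section

variable {α : Type*}

/-- Extended distance between two sets: `inf {d(x,y) : x ∈ s, y ∈ t}`. -/
def setD [PseudoEMetricSpace α] (s t : Set α) : ℝ≥0∞ := ⨅ x ∈ s, ⨅ y ∈ t, edist x y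

/-- A family of sets is `r`-disjoint if distinct members are at distance ≥ r. -/
def RDisjoint [PseudoEMetricSpace α] (r : ℝ) (𝒰 : Set (Set α)) : Prop :=
  ∀ U ∈ 𝒰, ∀ V ∈ 𝒰, U ≠ V → ENNReal.ofReal r ≤ setD U V

/-- A family is `R`-bounded if every member has diameter at most `R`. -/
def BoundedBy [PseudoEMetricSpace α] (R : ℝ) (𝒰 : Set (Set α)) : Prop :=
  ∀ U ∈ 𝒰, EMetric.diam U ≤ ENNReal.ofReal R

/-- A family is uniformly bounded if it is `R`-bounded for some `R`. -/
def UnifBounded [PseudoEMetricSpace α] (𝒰 : Set (Set α)) : Prop := ∃ R : ℝ, BoundedBy R 𝒰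

/-- `asdim X ≤ n`: for every `r > 0` there are `n+1` uniformly bounded `r`-disjoint
families whose union covers `X`. -/
def AsdimLE (X : Type*) [MetricSpace X] (n : ℕ) : Prop :=
  ∀ r : ℝ, 0 < r → ∃ 𝒰 : Fin (n + 1) → Set (Set X),
    (∀ k, RDisjoint r (𝒰 k) ∧ UnifBounded (𝒰 k)) ∧ (⋃ k, ⋃₀ 𝒰 k) = Set.univ

/-- The collection `A(X)` of finite nonempty subsets `σ ⊆ ℕ` such that there are NO
uniformly bounded families `𝒰 i` (`i ∈ σ`), each `i`-disjoint, whose union covers `X`. -/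
def AX (X : Type*) [MetricSpace X] : Set (Finset ℕ) :=
  {σ | σ.Nonempty ∧ ¬ ∃ 𝒰 : ℕ → Set (Set X),
    (∀ i ∈ σ, RDisjoint (i : ℝ) (𝒰 i) ∧ UnifBounded (𝒰 i)) ∧
    (⋃ i ∈ σ, ⋃₀ 𝒰 i) = Set.univ}

/-- `M^a = {τ ∈ FinN : τ ∪ {a} ∈ M, a ∉ τ}` (members of `FinN` are nonempty). -/
def derivSet (M : Set (Finset ℕ)) (a : ℕ) : Set (Finset ℕ) :=
  {τ | τ.Nonempty ∧ a ∉ τ ∧ insert a τ ∈ M}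

/-- `Ord M ≤ α`, defined inductively: `Ord ∅ ≤ α` for every `α`, and
`Ord M ≤ α` whenever for all `a ∈ ℕ` there is `β < α` with `Ord M^a ≤ β`. -/
inductive OrdLE : Set (Finset ℕ) → Ordinal.{0} → Prop
  | empty (α : Ordinal) : OrdLE ∅ α
  | step (M : Set (Finset ℕ)) (α : Ordinal) (β : ℕ → Ordinal)
      (hβ : ∀ a : ℕ, β a < α)
      (h : ∀ a : ℕ, OrdLE (derivSet M a) (β a)) : OrdLE M α

/-- `Ord M`: the least ordinal `α` with `Ord M ≤ α` (when one exists). -/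
def trOrd (M : Set (Finset ℕ)) : Ordinal := sInf {α | OrdLE M α}

/-- `U` is open in the subspace `S`. -/
def OpenIn [TopologicalSpace α] (S U : Set α) : Prop := ∃ V, IsOpen V ∧ U = V ∩ S

/-- `L` is a partition of `S` between `A` and `B`: `S = U ⊔ L ⊔ W` with `U, W`
open in `S`, `A ⊆ U`, `B ⊆ W`. -/
def PartitionBetween [TopologicalSpace α] (S A B L : Set α) : Prop :=
  ∃ U W : Set α, OpenIn S U ∧ OpenIn S W ∧ A ⊆ U ∧ B ⊆ W ∧
    S = U ∪ L ∪ W ∧ Disjoint U L ∧ Disjoint U W ∧ Disjoint L W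

/-- `L` is an `ε`-partition of `S` between `A` and `B`. -/
def EPartitionBetween [PseudoEMetricSpace α] (ε : ℝ) (S A B L : Set α) : Prop :=
  PartitionBetween S A B L ∧ ENNReal.ofReal ε < setD L A ∧ ENNReal.ofReal ε < setD L B

/-- The cube `[0,B]^n` in Euclidean space. -/
def cube (n : ℕ) (B : ℝ) : Set (EuclideanSpace ℝ (Fin n)) := {x | ∀ i, x i ∈ Set.Icc 0 B}

/-- The face `x_i = 0` of the cube `[0,B]^n`. -/
def faceNeg (n : ℕ) (B : ℝ) (i : Fin n) : Set (EuclideanSpace ℝ (Fin n)) :=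
  {x | x ∈ cube n B ∧ x i = 0}

/-- The face `x_i = B` of the cube `[0,B]^n`. -/
def facePos (n : ℕ) (B : ℝ) (i : Fin n) : Set (EuclideanSpace ℝ (Fin n)) :=
  {x | x ∈ cube n B ∧ x i = B}

/-- The number of coordinates of `x ∈ ℤ^d` not lying in `2^p ℤ`. -/
def badCount {d : ℕ} (x : Fin d → ℤ) (p : ℕ) : ℕ :=
  (Finset.univ.filter fun i => ¬ (2 : ℤ) ^ p ∣ x i).card

/-- The set of `x ∈ ℤ^d` satisfying, for each `(p, q)` in the list,
`|{i : x i ∉ 2^p ℤ}| ≤ q`.  Used to encode the spaces `X((p₁,…),(q₁,…))`. -/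
def XZ {d : ℕ} (cs : List (ℕ × ℕ)) : Set (Fin d → ℤ) :=
  {x | ∀ c ∈ cs, badCount x c.1 ≤ c.2}

end


section Aux

variable {X : Type*} [MetricSpace X]

lemma OrdLE.mono {M : Set (Finset ℕ)} {α α' : Ordinal} (h : OrdLE M α) (hle : α ≤ α') :
    OrdLE M α' := by
  induction h with
  | empty _ => exact OrdLE.empty α'
  | step M α β hβ hder ih => exact OrdLE.step M α' β (fun a => lt_of_lt_of_le (hβ a) hle) hder

lemma RDisjoint.mono' {r r' : ℝ} {𝒰 : Set (Set X)} (h : r' ≤ r) (hU : RDisjoint r 𝒰) :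
    RDisjoint r' 𝒰 := fun U hU' V hV hne =>
  le_trans (ENNReal.ofReal_le_ofReal h) (hU U hU' V hV hne)

lemma unifBounded_empty : UnifBounded (∅ : Set (Set X)) :=
  ⟨0, fun _ hU => absurd hU (Set.notMem_empty _)⟩

lemma rDisjoint_empty (r : ℝ) : RDisjoint r (∅ : Set (Set X)) :=
  fun _ hU => absurd hU (Set.notMem_empty _)

/-- If every member of `M` is nonempty with cardinality at most `n`, then `Ord M ≤ n`. -/
lemma ordLE_of_card_le {n : ℕ} :
    ∀ M : Set (Finset ℕ), (∀ σ ∈ M, σ.Nonempty ∧ σ.card ≤ n) → OrdLE M (n : Ordinal) := by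
  induction n with
  | zero =>
    intro M hM
    have : M = ∅ := by
      ext σ
      simp only [Set.mem_empty_iff_false, iff_false]
      intro hσ
      obtain ⟨hne, hcard⟩ := hM σ hσ
      simp [Finset.card_eq_zero.mp (Nat.le_zero.mp hcard)] at hne
    rw [this]; exact OrdLE.empty _
  | succ n ih =>
    intro M hM
    refine OrdLE.step M _ (fun _ => (n : Ordinal)) (fun a => ?_) (fun a => ?_)
    · show (n : Ordinal) < ((n + 1 : ℕ) : Ordinal)
      exact_mod_cast Nat.lt_succ_self n
    · refine ih _ (fun τ hτ => ?_)
      obtain ⟨hne, hmem, hins⟩ := hτ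
      refine ⟨hne, ?_⟩
      have := (hM _ hins).2
      rwa [Finset.card_insert_of_notMem hmem, Nat.succ_le_succ_iff] at this

/-- If `Ord M ≤ n` then every member of `M` has cardinality at most `n`. -/
lemma card_le_of_ordLE {n : ℕ} :
    ∀ M : Set (Finset ℕ), OrdLE M (n : Ordinal) → ∀ σ ∈ M, σ.card ≤ n := by
  induction n with
  | zero =>
    intro M h σ hσ
    cases h with
    | empty => exact absurd hσ (Set.notMem_empty _)
    | step _ _ β hβ _ => exact absurd (hβ 0) (by simp)
  | succ n ih =>
    intro M h σ hσ
    cases h with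
    | empty => exact absurd hσ (Set.notMem_empty _)
    | step _ _ β hβ hder =>
      rcases σ.eq_empty_or_nonempty with rfl | ⟨a, ha⟩
      · simp
      rcases (σ.erase a).eq_empty_or_nonempty with he | hne
      · have : σ.card ≤ 1 := by
          have : σ ⊆ {a} := fun x hx => by
            by_contra hxa
            have : x ∈ σ.erase a := Finset.mem_erase.mpr ⟨by simpa using hxa, hx⟩
            simp [he] at this
          calc σ.card ≤ ({a} : Finset ℕ).card := Finset.card_le_card this
            _ = 1 := Finset.card_singleton a
        omega
      · have hmem : σ.erase a ∈ derivSet M a :=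
          ⟨hne, Finset.notMem_erase a σ, by rwa [Finset.insert_erase ha]⟩
        have hβa : β a ≤ (n : Ordinal) := by
          have := hβ a
          rwa [Nat.cast_succ, Ordinal.add_one_eq_succ, Order.lt_succ_iff] at this
        have := ih _ ((hder a).mono hβa) _ hmem
        have hc := Finset.card_erase_add_one ha
        omega

lemma card_le_of_asdim {n : ℕ} (h : AsdimLE X n) : ∀ σ ∈ AX X, σ.card ≤ n := by
  intro σ hσ
  by_contra hcard
  push_neg at hcard
  obtain ⟨hne, hno⟩ := hσ
  apply hno
  obtain ⟨τ, hτσ, hτcard⟩ := Finset.exists_subset_card_eq (s := σ) (n := n + 1) hcard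
  set r : ℝ := (σ.max' hne : ℝ) + 1 with hr
  have hrpos : 0 < r := by positivity
  obtain ⟨𝒱, h𝒱, hcov⟩ := h r hrpos
  let f := τ.orderIsoOfFin hτcard
  classical
  refine ⟨fun i => if hi : i ∈ τ then 𝒱 (f.symm ⟨i, hi⟩) else ∅, fun i hi => ?_, ?_⟩
  · by_cases hiτ : i ∈ τ
    · simp only [dif_pos hiτ]
      refine ⟨RDisjoint.mono' ?_ (h𝒱 _).1, (h𝒱 _).2⟩
      have : i ≤ σ.max' hne := Finset.le_max' σ i hi
      rw [hr]
      exact_mod_cast le_trans (Nat.cast_le.mpr this) (le_of_lt (lt_add_one _))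
    · simp only [dif_neg hiτ]
      exact ⟨rDisjoint_empty _, unifBounded_empty⟩
  · apply Set.eq_univ_of_univ_subset
    intro x _
    have : x ∈ ⋃ k, ⋃₀ 𝒱 k := hcov ▸ Set.mem_univ x
    obtain ⟨k, hk⟩ := Set.mem_iUnion.mp this
    have hfk : (f k : ℕ) ∈ τ := (f k).2
    refine Set.mem_iUnion₂.mpr ⟨(f k : ℕ), hτσ hfk, ?_⟩
    have : (⟨(f k : ℕ), hfk⟩ : {x // x ∈ τ}) = f k := rfl
    simp only [dif_pos hfk, this, OrderIso.symm_apply_apply]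
    exact hk

end Aux

/-- For a metric space `X` and `n ∈ ℕ`, `trasdim X ≤ n` iff `asdim X ≤ n`. -/
theorem stmt2 (X : Type*) [MetricSpace X] (n : ℕ) :
    OrdLE (AX X) (n : Ordinal) ↔ AsdimLE X n := by
  constructor
  · intro h r hrpos
    set m : ℕ := ⌈r⌉₊ with hm
    set σ : Finset ℕ := Finset.image (fun k => m + k) (Finset.range (n + 1)) with hσ
    have hcard : σ.card = n + 1 := by
      rw [hσ, Finset.card_image_of_injective _ (add_right_injective m), Finset.card_range]
    have hne : σ.Nonempty := Finset.card_pos.mp (by omega)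
    have hnotAX : σ ∉ AX X := fun hmem => by
      have := card_le_of_ordLE _ h σ hmem
      omega
    have hex : ∃ 𝒰 : ℕ → Set (Set X),
        (∀ i ∈ σ, RDisjoint (i : ℝ) (𝒰 i) ∧ UnifBounded (𝒰 i)) ∧
        (⋃ i ∈ σ, ⋃₀ 𝒰 i) = Set.univ := by
      by_contra hex
      exact hnotAX ⟨hne, hex⟩
    obtain ⟨𝒰, h𝒰, hcov⟩ := hex
    have hmemσ : ∀ k : Fin (n + 1), (m + (k : ℕ)) ∈ σ := fun k => by
      rw [hσ]
      exact Finset.mem_image.mpr ⟨k, Finset.mem_range.mpr k.2, rfl⟩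
    refine ⟨fun k => 𝒰 (m + (k : ℕ)), fun k => ?_, ?_⟩
    · refine ⟨RDisjoint.mono' ?_ (h𝒰 _ (hmemσ k)).1, (h𝒰 _ (hmemσ k)).2⟩
      calc r ≤ (m : ℝ) := Nat.le_ceil r
        _ ≤ ((m + (k : ℕ) : ℕ) : ℝ) := by exact_mod_cast Nat.le_add_right m k
    · apply Set.eq_univ_of_univ_subset
      intro x _
      have : x ∈ ⋃ i ∈ σ, ⋃₀ 𝒰 i := hcov ▸ Set.mem_univ x
      obtain ⟨i, hi, hx⟩ := Set.mem_iUnion₂.mp this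
      rw [hσ] at hi
      obtain ⟨k, hk, rfl⟩ := Finset.mem_image.mp hi
      exact Set.mem_iUnion.mpr ⟨⟨k, Finset.mem_range.mp hk⟩, hx⟩
  · intro h
    exact ordLE_of_card_le _ (fun σ hσ => ⟨hσ.1, card_le_of_asdim h σ hσ⟩)
end

section
/- (Partition avoiding a disjoint family in a cube) Let L₀ = [0,B]^n for some B > 0, let F_k^+, F_k^- denote the pairs of opposite faces of L₀, and let 0 < ε < B/6. For each k = 1,…,n, if U_k is an ε-disjoint, (B/3)-bounded family of subsets of L_{k−1}, then there exists an ε-partition L_k of L_{k−1} between F_k^+ ∩ L_{k−1} and F_k^- ∩ L_{k−1} such that L_k ⊆ L_{k−1} ∩ (⋃U_k)^c. In particular, for the case k = 1: given an ε-disjoint (B/3)-bounded family U of subsets of [0,B]^n with 0 < ε < B/6, there is a closed set L ⊆ [0,B]^n disjoint from ⋃U, open sets U', W' with F_1^- ⊆ U', F_1^+ ⊆ W', [0,B]^n = U' ⊔ L ⊔ W', d(L, F_1^-) > ε and d(L, F_1^+) > ε. -/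
open Set Metric EMetric
open scoped ENNReal NNReal

section Aux

open Metric

variable {n : ℕ}

lemma coord_dist_le (x y : EuclideanSpace ℝ (Fin n)) (i : Fin n) :
    |x i - y i| ≤ dist x y := by
  rw [EuclideanSpace.dist_eq]
  have h1 : |x i - y i| = Real.sqrt (dist (x i) (y i) ^ 2) := by
    rw [Real.dist_eq, Real.sqrt_sq_eq_abs, abs_abs]
  rw [h1]
  apply Real.sqrt_le_sqrt
  exact Finset.single_le_sum (f := fun j => dist (x j) (y j) ^ 2)
    (fun j _ => sq_nonneg _) (Finset.mem_univ i)

lemma le_infDist' {P : Set (EuclideanSpace ℝ (Fin n))} (hP : P.Nonempty)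
    {x : EuclideanSpace ℝ (Fin n)} {m : ℝ} (h : ∀ p ∈ P, m ≤ dist x p) :
    m ≤ infDist x P := by
  refine le_of_not_gt fun hlt => ?_
  obtain ⟨p, hp, hd⟩ := (infDist_lt_iff hP).1 hlt
  exact absurd (h p hp) (not_le.2 hd)

end Aux

/-- Partition of the cube avoiding an `ε`-disjoint `(B/3)`-bounded family (case `k = 1`):
there is a closed set `L ⊆ [0,B]^n` disjoint from `⋃𝒰`, and open (in the cube) sets
`U', W'` with `F₁⁻ ⊆ U'`, `F₁⁺ ⊆ W'`, `[0,B]^n = U' ⊔ L ⊔ W'`, and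
`d(L, F₁⁻) > ε`, `d(L, F₁⁺) > ε`. -/

theorem stmt8 (n : ℕ) (hn : 0 < n) (B ε : ℝ) (hB : 0 < B) (hε : 0 < ε) (hεB : ε < B / 6)
    (𝒰 : Set (Set (EuclideanSpace ℝ (Fin n))))
    (hsub : ∀ U ∈ 𝒰, U ⊆ cube n B)
    (hdisj : RDisjoint ε 𝒰) (hbdd : BoundedBy (B / 3) 𝒰) :
    ∃ L U' W' : Set (EuclideanSpace ℝ (Fin n)),
      IsClosed L ∧ L ⊆ cube n B ∧ Disjoint L (⋃₀ 𝒰) ∧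
      OpenIn (cube n B) U' ∧ OpenIn (cube n B) W' ∧
      faceNeg n B ⟨0, hn⟩ ⊆ U' ∧ facePos n B ⟨0, hn⟩ ⊆ W' ∧
      cube n B = U' ∪ L ∪ W' ∧
      Disjoint U' L ∧ Disjoint U' W' ∧ Disjoint L W' ∧
      ENNReal.ofReal ε < setD L (faceNeg n B ⟨0, hn⟩) ∧
      ENNReal.ofReal ε < setD L (facePos n B ⟨0, hn⟩) := by
  classical
  set i0 : Fin n := ⟨0, hn⟩ with hi0
  set r : ℝ := min (ε/2) (B/12) with hrdef
  have hr0 : 0 < r := lt_min (by linarith) (by linarith)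
  have hrε : r < ε := (min_le_left _ _).trans_lt (by linarith)
  have hrB : r ≤ B/12 := min_le_right _ _
  -- helper: coordinate differences bounded by dist
  have hco : ∀ (x y : EuclideanSpace ℝ (Fin n)) (i : Fin n), x i - y i ≤ dist x y :=
    fun x y i => (le_abs_self _).trans (coord_dist_le x y i)
  set S : Set (EuclideanSpace ℝ (Fin n)) := {x | x ∈ cube n B ∧ B - 2*ε ≤ x i0} with hSdef
  have hSsub : S ⊆ cube n B := fun x hx => hx.1
  have hSne : S.Nonempty := by
    refine ⟨(WithLp.toLp 2 (fun _ => B) : EuclideanSpace ℝ (Fin n)), ⟨fun i => ⟨hB.le, le_refl B⟩, ?_⟩⟩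
    show B - 2*ε ≤ B
    linarith
  set 𝒰₁ : Set (Set (EuclideanSpace ℝ (Fin n))) :=
    {U | U ∈ 𝒰 ∧ ∃ u ∈ U, Metric.infDist u S ≤ r} with h𝒰₁def
  set P : Set (EuclideanSpace ℝ (Fin n)) := S ∪ ⋃₀ 𝒰₁ with hPdef
  have hPne : P.Nonempty := hSne.mono subset_union_left
  -- every point of P has first coordinate ≥ 2B/3 - 2ε - r
  have hPcoord : ∀ p ∈ P, 2*B/3 - 2*ε - r ≤ p i0 := by
    rintro p (hp | ⟨U, ⟨hU𝒰, u, hu, huS⟩, hpU⟩)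
    · have h2 := hp.2
      linarith
    · have hu0 : B - 2*ε - r ≤ u i0 := by
        have hle : B - 2*ε - u i0 ≤ Metric.infDist u S := by
          apply le_infDist' hSne
          intro s hs
          have h1 := hco s u i0
          have h2 : B - 2*ε ≤ s i0 := hs.2
          have h3 : dist u s = dist s u := dist_comm u s
          linarith
        linarith
      have hdpu : dist p u ≤ B/3 := by
        have h1 : edist p u ≤ ENNReal.ofReal (B/3) :=
          (EMetric.edist_le_diam_of_mem hpU hu).trans (hbdd U hU𝒰)
        rw [edist_dist] at h1
        exact (ENNReal.ofReal_le_ofReal_iff (by linarith)).1 h1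
      have h4 := hco u p i0
      have h5 : dist u p = dist p u := dist_comm u p
      linarith
  set L : Set (EuclideanSpace ℝ (Fin n)) :=
    cube n B ∩ (fun x => Metric.infDist x P) ⁻¹' {r} with hLdef
  set Uo : Set (EuclideanSpace ℝ (Fin n)) :=
    cube n B ∩ (fun x => Metric.infDist x P) ⁻¹' (Set.Ioi r) with hUodef
  set Wo : Set (EuclideanSpace ℝ (Fin n)) :=
    cube n B ∩ (fun x => Metric.infDist x P) ⁻¹' (Set.Iio r) with hWodef
  have hcubeClosed : IsClosed (cube n B) := by
    have hcont : ∀ i : Fin n, Continuous fun x : EuclideanSpace ℝ (Fin n) => x i := by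
      intro i
      refine (LipschitzWith.of_dist_le_mul (K := 1) fun x y => ?_).continuous
      simpa [Real.dist_eq] using coord_dist_le x y i
    have : cube n B = ⋂ i : Fin n, (fun x : EuclideanSpace ℝ (Fin n) => x i) ⁻¹' Set.Icc 0 B := by
      ext x
      simp [cube, Set.mem_iInter]
    rw [this]
    exact isClosed_iInter fun i => isClosed_Icc.preimage (hcont i)
  have hcontInf : Continuous fun x : EuclideanSpace ℝ (Fin n) => Metric.infDist x P :=
    Metric.continuous_infDist_pt P
  -- membership characterizations
  have hLmem : ∀ x, x ∈ L ↔ x ∈ cube n B ∧ Metric.infDist x P = r := by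
    intro x; simp [hLdef]
  -- facts about points of L
  have hLlow : ∀ x ∈ L, 2*B/3 - 2*ε - 2*r ≤ x i0 := by
    intro x hx
    obtain ⟨hxc, hxr⟩ := (hLmem x).1 hx
    by_contra hcon
    push_neg at hcon
    have hδ : (0:ℝ) < 2*B/3 - 2*ε - 2*r - x i0 := by linarith
    have hlt : Metric.infDist x P < r + (2*B/3 - 2*ε - 2*r - x i0) := by
      rw [hxr]; linarith
    obtain ⟨p, hp, hdp⟩ := (Metric.infDist_lt_iff hPne).1 hlt
    have h1 := hPcoord p hp
    have h2 := hco p x i0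
    have h3 : dist x p = dist p x := dist_comm x p
    linarith
  have hLhigh : ∀ x ∈ L, x i0 ≤ B - 2*ε - r := by
    intro x hx
    obtain ⟨hxc, hxr⟩ := (hLmem x).1 hx
    have hxS : x i0 < B - 2*ε := by
      by_contra hcon
      push_neg at hcon
      have hxP : x ∈ P := Or.inl ⟨hxc, hcon⟩
      rw [Metric.infDist_zero_of_mem hxP] at hxr
      linarith
    set s : EuclideanSpace ℝ (Fin n) := WithLp.toLp 2 (fun j => if j = i0 then B - 2*ε else x j) with hsdef
    have hsi0 : s i0 = B - 2*ε := by simp [hsdef]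
    have hsS : s ∈ S := by
      constructor
      · intro j
        by_cases hj : j = i0
        · show (if j = i0 then B - 2*ε else x j) ∈ Set.Icc 0 B
          rw [if_pos hj]
          constructor <;> linarith
        · show (if j = i0 then B - 2*ε else x j) ∈ Set.Icc 0 B
          rw [if_neg hj]
          exact hxc j
      · show B - 2*ε ≤ s i0
        rw [hsi0]
    have hds : dist x s = B - 2*ε - x i0 := by
      rw [EuclideanSpace.dist_eq]
      have hsum : (∑ j : Fin n, dist (x j) (s j) ^ 2) = dist (x i0) (s i0) ^ 2 := by
        apply Finset.sum_eq_single i0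
        · intro j _ hj
          have : s j = x j := by simp [hsdef, if_neg hj]
          rw [this, dist_self]
          ring
        · intro h; exact absurd (Finset.mem_univ i0) h
      rw [hsum, Real.dist_eq, hsi0, sq_abs, Real.sqrt_sq_eq_abs, abs_sub_comm,
        abs_of_nonneg (by linarith)]
    have h1 : Metric.infDist x P ≤ Metric.infDist x S :=
      Metric.infDist_le_infDist_of_subset subset_union_left hSne
    have h2 : Metric.infDist x S ≤ dist x s := Metric.infDist_le_dist_of_mem hsS
    rw [hxr, hds] at *
    linarith [h1.trans h2]
  -- L disjoint from the family
  have hLdisj : Disjoint L (⋃₀ 𝒰) := by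
    rw [Set.disjoint_left]
    rintro x hxL ⟨V, hV𝒰, hxV⟩
    obtain ⟨hxc, hxr⟩ := (hLmem x).1 hxL
    by_cases hV1 : V ∈ 𝒰₁
    · have hxP : x ∈ P := Or.inr ⟨V, hV1, hxV⟩
      rw [Metric.infDist_zero_of_mem hxP] at hxr
      linarith
    · have hVfar : ∀ u ∈ V, r < Metric.infDist u S := by
        intro u hu
        by_contra hcon
        push_neg at hcon
        exact hV1 ⟨hV𝒰, u, hu, hcon⟩
      have hxr' : min (Metric.infDist x S) ε ≤ Metric.infDist x P := by
        apply le_infDist' hPne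
        rintro p (hp | ⟨U, hU1, hpU⟩)
        · exact (min_le_left _ _).trans (Metric.infDist_le_dist_of_mem hp)
        · have hVU : V ≠ U := fun h => hV1 (h ▸ hU1)
          have h1 : ENNReal.ofReal ε ≤ setD V U := hdisj V hV𝒰 U hU1.1 hVU
          have h2 : setD V U ≤ edist x p := by
            refine iInf₂_le_of_le x hxV ?_
            exact iInf₂_le p hpU
          have h3 := h1.trans h2
          rw [edist_dist] at h3
          exact (min_le_right _ _).trans ((ENNReal.ofReal_le_ofReal_iff dist_nonneg).1 h3)
      have := hVfar x hxV
      rw [hxr] at hxr'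
      have := lt_min this hrε
      exact absurd hxr' (not_le.2 this)
  refine ⟨L, Uo, Wo, ?_, Set.inter_subset_left, hLdisj, ?_, ?_, ?_, ?_, ?_, ?_, ?_, ?_, ?_, ?_⟩
  · exact hcubeClosed.inter (isClosed_singleton.preimage hcontInf)
  · exact ⟨(fun x => Metric.infDist x P) ⁻¹' (Set.Ioi r),
      isOpen_Ioi.preimage hcontInf, (Set.inter_comm _ _)⟩
  · exact ⟨(fun x => Metric.infDist x P) ⁻¹' (Set.Iio r),
      isOpen_Iio.preimage hcontInf, (Set.inter_comm _ _)⟩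
  · -- faceNeg ⊆ Uo
    rintro q ⟨hqc, hq0⟩
    refine ⟨hqc, ?_⟩
    show r < Metric.infDist q P
    have hge : 2*B/3 - 2*ε - r ≤ Metric.infDist q P := by
      apply le_infDist' hPne
      intro p hp
      have h1 := hPcoord p hp
      have h2 := hco p q i0
      have h3 : dist q p = dist p q := dist_comm q p
      rw [hq0] at h2
      linarith
    linarith
  · -- facePos ⊆ Wo
    rintro q ⟨hqc, hqB⟩
    refine ⟨hqc, ?_⟩
    show Metric.infDist q P < r
    have hqP : q ∈ P := Or.inl ⟨hqc, by rw [hqB]; linarith⟩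
    rw [Metric.infDist_zero_of_mem hqP]
    exact hr0
  · -- cube = Uo ∪ L ∪ Wo
    ext x
    constructor
    · intro hx
      rcases lt_trichotomy (Metric.infDist x P) r with h | h | h
      · exact Or.inr ⟨hx, h⟩
      · exact Or.inl (Or.inr ⟨hx, h⟩)
      · exact Or.inl (Or.inl ⟨hx, h⟩)
    · rintro ((h | h) | h) <;> exact h.1
  · -- Disjoint Uo L
    rw [Set.disjoint_left]
    rintro x ⟨_, hx1⟩ ⟨_, hx2⟩
    simp only [Set.mem_preimage, Set.mem_Ioi, Set.mem_singleton_iff] at hx1 hx2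
    rw [hx2] at hx1
    exact lt_irrefl r hx1
  · -- Disjoint Uo Wo
    rw [Set.disjoint_left]
    rintro x ⟨_, hx1⟩ ⟨_, hx2⟩
    simp only [Set.mem_preimage, Set.mem_Ioi, Set.mem_Iio] at hx1 hx2
    exact lt_irrefl r (hx1.trans hx2)
  · -- Disjoint L Wo
    rw [Set.disjoint_left]
    rintro x ⟨_, hx1⟩ ⟨_, hx2⟩
    simp only [Set.mem_preimage, Set.mem_Iio, Set.mem_singleton_iff] at hx1 hx2
    rw [hx1] at hx2
    exact lt_irrefl r hx2
  · -- setD L faceNeg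
    have hlt : ENNReal.ofReal ε < ENNReal.ofReal (B/2 - 2*ε) :=
      (ENNReal.ofReal_lt_ofReal_iff (by linarith)).2 (by linarith)
    refine hlt.trans_le ?_
    simp only [setD]
    refine le_iInf₂ fun x hx => le_iInf₂ fun y hy => ?_
    rw [edist_dist]
    apply ENNReal.ofReal_le_ofReal
    have h1 := hLlow x hx
    have h2 := hco x y i0
    have h3 : y i0 = 0 := hy.2
    linarith
  · -- setD L facePos
    have hlt : ENNReal.ofReal ε < ENNReal.ofReal (2*ε) :=
      (ENNReal.ofReal_lt_ofReal_iff (by linarith)).2 (by linarith)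
    refine hlt.trans_le ?_
    simp only [setD]
    refine le_iInf₂ fun x hx => le_iInf₂ fun y hy => ?_
    rw [edist_dist]
    apply ENNReal.ofReal_le_ofReal
    have h1 := hLhigh x hx
    have h2 := hco y x i0
    have h3 : y i0 = B := hy.2
    have h4 : dist x y = dist y x := dist_comm x y
    linarith
end

section
/- (Engelking's nested partitions lemma) Let F_i^+, F_i^- for i ∈ {1,…,n} be the pairs of opposite faces of the cube Iⁿ = [0,1]ⁿ. If Iⁿ = L'₀ ⊇ L'₁ ⊇ ⋯ ⊇ L'ₙ is a decreasing sequence of closed sets such that each L'ᵢ is a partition of L'_{i−1} between L'_{i−1} ∩ F_i^+ and L'_{i−1} ∩ F_i^-, then L'ₙ ≠ ∅. -/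
namespace Engel
open Finset


/-- even card via fixed-point-free involution -/
lemma even_card_of_invol {α : Type*} [DecidableEq α] (s : Finset α) (f : α → α)
    (h1 : ∀ a ∈ s, f a ∈ s) (h2 : ∀ a ∈ s, f (f a) = a) (h3 : ∀ a ∈ s, f a ≠ a) :
    s.card % 2 = 0 := by
  suffices H : ∀ (n : ℕ) (s : Finset α), (∀ a ∈ s, f a ∈ s) → (∀ a ∈ s, f (f a) = a) →
      (∀ a ∈ s, f a ≠ a) → s.card = n → s.card % 2 = 0 by
    exact H s.card s h1 h2 h3 rfl
  clear h1 h2 h3 s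
  intro n
  induction n using Nat.strong_induction_on with
  | _ n ih =>
    intro s h1 h2 h3 hs
    rcases s.eq_empty_or_nonempty with rfl | ⟨a, ha⟩
    · rw [Finset.card_empty]
    · have hfa := h1 a ha
      have hne := h3 a ha
      set t := s.erase a |>.erase (f a) with ht
      have hcard : t.card = s.card - 2 := by
        rw [ht, Finset.card_erase_of_mem (Finset.mem_erase.2 ⟨hne, hfa⟩),
          Finset.card_erase_of_mem ha]
        omega
      have hts : ∀ b ∈ t, b ∈ s := by
        intro b hb; exact Finset.mem_of_mem_erase (Finset.mem_of_mem_erase hb)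
      have h1' : ∀ b ∈ t, f b ∈ t := by
        intro b hb
        have hbs := hts b hb
        have hb1 : b ≠ f a := (Finset.mem_erase.1 hb).1
        have hb2 : b ≠ a := (Finset.mem_erase.1 (Finset.mem_of_mem_erase hb)).1
        refine Finset.mem_erase.2 ⟨?_, Finset.mem_erase.2 ⟨?_, h1 b hbs⟩⟩
        · intro h; exact hb2 (by rw [← h2 a ha, ← h]; exact (h2 b hbs).symm ▸ rfl)
        · intro h; exact hb1 (by rw [← h2 b hbs, h])
      have h2' : ∀ b ∈ t, f (f b) = b := fun b hb => h2 b (hts b hb)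
      have h3' : ∀ b ∈ t, f b ≠ b := fun b hb => h3 b (hts b hb)
      have hlt : t.card < n := by
        have : 0 < s.card := Finset.card_pos.2 ⟨a, ha⟩
        omega
      have := ih t.card hlt t h1' h2' h3' rfl
      have h2le : 2 ≤ s.card := by
        have : f a ∈ s.erase a := Finset.mem_erase.2 ⟨hne, hfa⟩
        have h1' : 1 ≤ (s.erase a).card := Finset.card_pos.2 ⟨f a, this⟩
        have := Finset.card_erase_of_mem ha
        omega
      omega



def vtx {n : ℕ} (b : Fin n → ℕ) (δ : Equiv.Perm (Fin n)) (k : ℕ) : Fin n → ℕ :=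
  fun i => b i + if (δ i : ℕ) < k then 1 else 0

def gl {n : ℕ} (ℓ : (Fin n → ℕ) → ℕ) (p : (Fin n → ℕ) × Equiv.Perm (Fin n)) :
    Fin (n + 1) → ℕ := fun k => ℓ (vtx p.1 p.2 (k : ℕ))

def isDoor {n : ℕ} (g : Fin (n + 1) → ℕ) (k : Fin (n + 1)) : Prop :=
  Finset.range n ⊆ Finset.image g (Finset.univ.erase k)

def isFull {n : ℕ} (g : Fin (n + 1) → ℕ) : Prop :=
  Finset.range (n + 1) ⊆ Finset.image g Finset.univ

instance {n : ℕ} (g : Fin (n+1) → ℕ) (k) : Decidable (isDoor g k) := by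
  unfold isDoor; infer_instance
instance {n : ℕ} (g : Fin (n+1) → ℕ) : Decidable (isFull g) := by
  unfold isFull; infer_instance

def baseSet (n N : ℕ) : Finset (Fin n → ℕ) := Fintype.piFinset fun _ => Finset.range N

def simps (n N : ℕ) : Finset ((Fin n → ℕ) × Equiv.Perm (Fin n)) := baseSet n N ×ˢ univ

def FL (n N : ℕ) (ℓ : (Fin n → ℕ) → ℕ) : ℕ :=
  ((simps n N).filter fun p => isFull (gl ℓ p)).card

lemma mem_simps {n N : ℕ} (p : (Fin n → ℕ) × Equiv.Perm (Fin n)) :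
    p ∈ simps n N ↔ ∀ i, p.1 i < N := by
  simp [simps, baseSet, Fintype.mem_piFinset]

lemma vtx_grid {n N : ℕ} {b : Fin n → ℕ} (hb : ∀ i, b i < N) (δ : Equiv.Perm (Fin n))
    (k : ℕ) (i : Fin n) : vtx b δ k i ≤ N := by
  unfold vtx
  have := hb i
  split <;> omega

def Dset (n N : ℕ) (ℓ : (Fin n → ℕ) → ℕ) :
    Finset (((Fin n → ℕ) × Equiv.Perm (Fin n)) × Fin (n + 1)) :=
  (simps n N ×ˢ univ).filter fun q => isDoor (gl ℓ q.1) q.2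

lemma mem_Dset {n N : ℕ} {ℓ : (Fin n → ℕ) → ℕ}
    (q : ((Fin n → ℕ) × Equiv.Perm (Fin n)) × Fin (n + 1)) :
    q ∈ Dset n N ℓ ↔ (∀ i, q.1.1 i < N) ∧ isDoor (gl ℓ q.1) q.2 := by
  simp [Dset, Finset.mem_filter, Finset.mem_product, mem_simps]




/-- swap invariance -/
lemma vtx_swap {n : ℕ} (b : Fin n → ℕ) (δ : Equiv.Perm (Fin n)) (x y : Fin n)
    (hxy : (x : ℕ) + 1 = (y : ℕ)) (j : ℕ) (hj : j ≠ (y : ℕ)) :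
    vtx b (δ.trans (Equiv.swap x y)) j = vtx b δ j := by
  funext i
  unfold vtx
  simp only [Equiv.trans_apply]
  congr 1
  have hxyne : x ≠ y := by intro h; rw [h] at hxy; omega
  rcases eq_or_ne (δ i) x with h | h
  · simp only [h, Equiv.swap_apply_left]
    exact if_congr (by omega) rfl rfl
  rcases eq_or_ne (δ i) y with h2 | h2
  · simp only [h2, Equiv.swap_apply_right]
    exact if_congr (by omega) rfl rfl
  · simp only [Equiv.swap_apply_of_ne_of_ne h h2]

lemma finRotate_symm_val {m : ℕ} (t : Fin (m + 1)) (ht : t ≠ 0) :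
    (((finRotate (m + 1)).symm t : Fin (m + 1)) : ℕ) = (t : ℕ) - 1 := by
  have htv : (t : ℕ) ≠ 0 := fun h => ht (Fin.ext h)
  have h1 : (finRotate (m + 1)) ⟨(t : ℕ) - 1, by omega⟩ = t := by
    rw [finRotate_succ_apply]
    apply Fin.ext
    rw [Fin.val_add]
    simp only [Fin.val_one']
    have h2 := t.isLt
    rcases Nat.eq_zero_or_pos m with rfl | hm
    · omega
    · have hm1 : 1 % (m + 1) = 1 := Nat.mod_eq_of_lt (by omega)
      rw [hm1]
      have h3 : (t : ℕ) - 1 + 1 = (t : ℕ) := by omega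
      rw [h3, Nat.mod_eq_of_lt t.isLt]
  conv_lhs => rw [← h1]
  rw [Equiv.symm_apply_apply]

lemma finRotate_symm_zero {m : ℕ} :
    ((finRotate (m + 1)).symm 0 : Fin (m + 1)) = Fin.last m := by
  rw [Equiv.symm_apply_eq, finRotate_succ_apply]
  apply Fin.ext
  rw [Fin.val_add]
  simp [Fin.val_last, Fin.val_one']

/-- forward rotation values -/
lemma finRotate_val {m : ℕ} (t : Fin (m + 1)) (ht : t ≠ Fin.last m) :
    ((finRotate (m + 1) t : Fin (m + 1)) : ℕ) = (t : ℕ) + 1 := by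
  rw [finRotate_succ_apply]
  have htv : (t : ℕ) < m := by
    rcases Nat.lt_or_ge (t : ℕ) m with h | h
    · exact h
    · exfalso; exact ht (Fin.ext (by have := t.isLt; simp [Fin.val_last]; omega))
  rw [Fin.val_add]
  simp only [Fin.val_one']
  rcases Nat.eq_zero_or_pos m with rfl | hm
  · omega
  · have : 1 % (m + 1) = 1 := Nat.mod_eq_of_lt (by omega)
    rw [this, Nat.mod_eq_of_lt (by omega)]

lemma finRotate_last {m : ℕ} : finRotate (m + 1) (Fin.last m) = 0 := by
  rw [← finRotate_symm_zero, Equiv.apply_symm_apply]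

/-- the forward shift identity -/
lemma vtx_rot {m : ℕ} (b : Fin (m + 1) → ℕ) (δ : Equiv.Perm (Fin (m + 1))) (j : ℕ)
    (hj : j ≤ m) :
    vtx (Function.update b (δ.symm 0) (b (δ.symm 0) + 1)) (δ.trans (finRotate (m + 1)).symm) j
      = vtx b δ (j + 1) := by
  funext i
  unfold vtx
  simp only [Equiv.trans_apply]
  rcases eq_or_ne (δ i) 0 with h | h
  · have hi : i = δ.symm 0 := by rw [← h, Equiv.symm_apply_apply]
    rw [hi]
    simp only [Equiv.apply_symm_apply, finRotate_symm_zero, Fin.val_last, Fin.val_zero]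
    rw [Function.update_self, if_neg (by omega), if_pos (by omega)]
  · have hi : i ≠ δ.symm 0 := by
      intro hh; apply h; rw [hh, Equiv.apply_symm_apply]
    have hv : (δ i : ℕ) ≠ 0 := fun hh => h (Fin.ext hh)
    simp only [Function.update_of_ne hi, finRotate_symm_val _ h]
    congr 1
    exact if_congr (by omega) rfl rfl

/-- the backward shift identity -/
lemma vtx_rot' {m : ℕ} (b : Fin (m + 1) → ℕ) (δ : Equiv.Perm (Fin (m + 1)))
    (hb : b (δ.symm (Fin.last m)) ≠ 0) (j : ℕ) (hj : j ≤ m) :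
    vtx (Function.update b (δ.symm (Fin.last m)) (b (δ.symm (Fin.last m)) - 1))
      (δ.trans (finRotate (m + 1))) (j + 1) = vtx b δ j := by
  funext i
  unfold vtx
  simp only [Equiv.trans_apply]
  rcases eq_or_ne (δ i) (Fin.last m) with h | h
  · have hi : i = δ.symm (Fin.last m) := by rw [← h, Equiv.symm_apply_apply]
    have hbi : b (δ.symm (Fin.last m)) ≠ 0 := by rw [← hi]; exact fun hh => (hb (hi ▸ hh)).elim
    rw [hi]
    simp only [Equiv.apply_symm_apply, finRotate_last, Fin.val_zero, Fin.val_last]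
    rw [Function.update_self, if_pos (by omega), if_neg (by omega)]
    omega
  · have hi : i ≠ δ.symm (Fin.last m) := by
      intro hh; apply h; rw [hh, Equiv.apply_symm_apply]
    simp only [Function.update_of_ne hi, finRotate_val _ h]
    congr 1
    exact if_congr (by omega) rfl rfl

/-- restriction of a permutation fixing `last` -/
def permDown {m : ℕ} (δ : Equiv.Perm (Fin (m + 1))) (hδ : δ (Fin.last m) = Fin.last m) :
    Equiv.Perm (Fin m) where
  toFun i := Fin.castPred (δ i.castSucc) (by
    intro h
    have : i.castSucc = Fin.last m := by
      have := δ.injective (h.trans hδ.symm); exact this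
    exact absurd this (Fin.castSucc_lt_last i).ne)
  invFun i := Fin.castPred (δ.symm i.castSucc) (by
    intro h
    have h2 : i.castSucc = Fin.last m := by
      have := congrArg δ h
      rw [Equiv.apply_symm_apply, hδ] at this
      exact this
    exact absurd h2 (Fin.castSucc_lt_last i).ne)
  left_inv i := by
    apply Fin.castSucc_injective
    rw [Fin.castSucc_castPred, Fin.castSucc_castPred, Equiv.symm_apply_apply]
  right_inv i := by
    apply Fin.castSucc_injective
    rw [Fin.castSucc_castPred, Fin.castSucc_castPred, Equiv.apply_symm_apply]

/-- extension of a permutation by fixing `last` -/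
def permUp {m : ℕ} (δ : Equiv.Perm (Fin m)) : Equiv.Perm (Fin (m + 1)) where
  toFun := Fin.lastCases (Fin.last m) (fun i => (δ i).castSucc)
  invFun := Fin.lastCases (Fin.last m) (fun i => (δ.symm i).castSucc)
  left_inv i := by
    cases i using Fin.lastCases with
    | last => simp
    | cast i => simp
  right_inv i := by
    cases i using Fin.lastCases with
    | last => simp
    | cast i => simp

lemma permUp_last {m : ℕ} (δ : Equiv.Perm (Fin m)) : permUp δ (Fin.last m) = Fin.last m := by
  simp [permUp]

lemma permUp_castSucc {m : ℕ} (δ : Equiv.Perm (Fin m)) (i : Fin m) :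
    permUp δ i.castSucc = (δ i).castSucc := by
  simp [permUp]

lemma permDown_apply_val {m : ℕ} (δ : Equiv.Perm (Fin (m + 1))) (hδ) (i : Fin m) :
    (((permDown δ hδ) i : Fin m) : ℕ) = ((δ i.castSucc : Fin (m + 1)) : ℕ) := rfl

lemma permDown_permUp {m : ℕ} (δ : Equiv.Perm (Fin m)) (h) :
    permDown (permUp δ) h = δ := by
  apply Equiv.ext
  intro i
  apply Fin.ext
  rw [permDown_apply_val, permUp_castSucc, Fin.coe_castSucc]

lemma permUp_permDown {m : ℕ} (δ : Equiv.Perm (Fin (m + 1)))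
    (hδ : δ (Fin.last m) = Fin.last m) : permUp (permDown δ hδ) = δ := by
  apply Equiv.ext
  intro i
  cases i using Fin.lastCases with
  | last => rw [permUp_last, hδ]
  | cast i =>
    rw [permUp_castSucc]
    apply Fin.ext
    simp only [Fin.coe_castSucc, permDown_apply_val]

lemma doors_card_mod_two {n : ℕ} (g : Fin (n + 1) → ℕ) (hg : ∀ k, g k ≤ n) :
    (univ.filter fun k => isDoor g k).card % 2 = if isFull g then 1 else 0 := by
  by_cases hfull : isFull g
  · have himg : Finset.image g Finset.univ = Finset.range (n + 1) := by
      apply Finset.Subset.antisymm _ hfull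
      intro m hm
      simp only [Finset.mem_image] at hm
      obtain ⟨k, -, rfl⟩ := hm
      exact Finset.mem_range.2 (Nat.lt_succ_of_le (hg k))
    have hinj : Set.InjOn g (Finset.univ : Finset (Fin (n+1))) := by
      apply Finset.injOn_of_card_image_eq
      rw [himg]; simp
    obtain ⟨k₀, -, hk₀⟩ : ∃ k ∈ Finset.univ, g k = n := by
      have : n ∈ Finset.image g Finset.univ := himg ▸ Finset.mem_range.2 (Nat.lt_succ_self n)
      simpa using Finset.mem_image.1 this
    have : (univ.filter fun k => isDoor g k) = {k₀} := by
      ext k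
      simp only [Finset.mem_filter, Finset.mem_univ, true_and, Finset.mem_singleton]
      constructor
      · intro hd
        by_contra hk
        have hgk : g k < n := by
          rcases Nat.lt_or_ge (g k) n with h | h
          · exact h
          · exfalso
            have h1 : g k = g k₀ := by
              have := hg k; rw [hk₀]; omega
            exact hk (hinj (by simp) (by simp) h1)
        have := hd (Finset.mem_range.2 hgk)
        simp only [Finset.mem_image, Finset.mem_erase] at this
        obtain ⟨k', ⟨hk', -⟩, hgk'⟩ := this
        exact hk' (hinj (by simp) (by simp) hgk')
      · rintro rfl
        intro m hm
        have : m ∈ Finset.image g Finset.univ := himg ▸ (Finset.mem_range.2 (by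
          exact Nat.lt_succ_of_lt (Finset.mem_range.1 hm)))
        obtain ⟨k', -, hk'⟩ := Finset.mem_image.1 this
        refine Finset.mem_image.2 ⟨k', Finset.mem_erase.2 ⟨?_, by simp⟩, hk'⟩
        rintro rfl
        rw [hk₀] at hk'
        have := Finset.mem_range.1 hm
        omega
    rw [this]; simp [hfull]
  · by_cases hd : ∃ k, isDoor g k
    · obtain ⟨k₁, hk₁⟩ := hd
      have hsub : Finset.range n ⊆ Finset.image g Finset.univ :=
        hk₁.trans (Finset.image_subset_image (Finset.erase_subset _ _))
      have hn : ∀ k, g k < n := by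
        intro k
        rcases Nat.lt_or_ge (g k) n with h | h
        · exact h
        · exfalso; apply hfull
          intro m hm
          rcases Nat.lt_or_ge m n with h' | h'
          · exact hsub (Finset.mem_range.2 h')
          · have hmn : m = n := by have := Finset.mem_range.1 hm; omega
            subst hmn
            have hgkm : g k = m := by have := hg k; omega
            exact Finset.mem_image.2 ⟨k, by simp, hgkm⟩
      obtain ⟨a, -, b, -, hab, hgab⟩ :=
        Finset.exists_ne_map_eq_of_card_lt_of_maps_to
          (show (Finset.range n).card < (Finset.univ : Finset (Fin (n+1))).card by simp)
          (fun k _ => Finset.mem_range.2 (hn k))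
      have key : (univ.filter fun k => isDoor g k) = {a, b} := by
        ext k
        simp only [Finset.mem_filter, Finset.mem_univ, true_and, Finset.mem_insert,
          Finset.mem_singleton]
        constructor
        · intro hdk
          by_contra hk
          push_neg at hk
          have hcard : (Finset.univ.erase k).card = n + 1 - 1 := by
            rw [Finset.card_erase_of_mem (by simp)]; simp
          have himgsub : Finset.image g (Finset.univ.erase k) ⊆ Finset.range n := by
            intro m hm
            obtain ⟨k', -, rfl⟩ := Finset.mem_image.1 hm
            exact Finset.mem_range.2 (hn k')
          have heq : Finset.image g (Finset.univ.erase k) = Finset.range n :=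
            Finset.Subset.antisymm himgsub hdk
          have hinj : Set.InjOn g (Finset.univ.erase k : Finset (Fin (n+1))) := by
            apply Finset.injOn_of_card_image_eq
            rw [heq]; simp [hcard]
          exact hab (hinj (Finset.mem_coe.2 (Finset.mem_erase.2 ⟨Ne.symm hk.1, by simp⟩))
            (Finset.mem_coe.2 (Finset.mem_erase.2 ⟨Ne.symm hk.2, by simp⟩)) hgab)
        · intro hk
          have main : ∀ x y : Fin (n+1), x ≠ y → g x = g y → isDoor g x := by
            intro x y hxy hgxy m hm
            obtain ⟨k', -, hk'⟩ := Finset.mem_image.1 (hsub hm)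
            by_cases hkx : k' = x
            · refine Finset.mem_image.2 ⟨y, Finset.mem_erase.2 ⟨hxy.symm, by simp⟩, ?_⟩
              rw [← hgxy, ← hkx]; exact hk'
            · exact Finset.mem_image.2 ⟨k', Finset.mem_erase.2 ⟨hkx, by simp⟩, hk'⟩
          rcases hk with rfl | rfl
          · exact main k b hab hgab
          · exact main k a hab.symm hgab.symm
      rw [key]
      rw [Finset.card_insert_of_notMem (by simpa using hab), Finset.card_singleton]
      simp [hfull]
    · push_neg at hd
      have : (univ.filter fun k => isDoor g k) = ∅ := by
        ext k; simp [hd k]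
      rw [this]; simp [hfull]


lemma fin_ne_last_iff {m : ℕ} (k : Fin (m + 2)) : k ≠ Fin.last (m + 1) ↔ (k : ℕ) ≠ m + 1 := by
  rw [ne_eq, Fin.ext_iff, Fin.val_last]

lemma fin_ne_zero_iff {m : ℕ} (k : Fin (m + 2)) : k ≠ 0 ↔ (k : ℕ) ≠ 0 := by
  rw [ne_eq, Fin.ext_iff, Fin.val_zero]

/-- image transfer for the forward rotation -/
lemma image_rot {m N : ℕ} (ℓ : (Fin (m + 1) → ℕ) → ℕ) (b : Fin (m + 1) → ℕ)
    (δ : Equiv.Perm (Fin (m + 1))) :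
    Finset.image (gl ℓ (Function.update b (δ.symm 0) (b (δ.symm 0) + 1),
        δ.trans (finRotate (m + 1)).symm)) (Finset.univ.erase (Fin.last (m + 1)))
      = Finset.image (gl ℓ (b, δ)) (Finset.univ.erase 0) := by
  ext v
  simp only [Finset.mem_image, Finset.mem_erase, Finset.mem_univ, and_true]
  constructor
  · rintro ⟨k, hk, rfl⟩
    have hkv : (k : ℕ) ≠ m + 1 := (fin_ne_last_iff k).1 hk
    have hkl : (k : ℕ) < m + 2 := k.isLt
    refine ⟨⟨(k : ℕ) + 1, by omega⟩, by rw [fin_ne_zero_iff]; simp, ?_⟩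
    show ℓ _ = ℓ _
    rw [show ((⟨(k : ℕ) + 1, by omega⟩ : Fin (m + 2)) : ℕ) = (k : ℕ) + 1 from rfl]
    rw [vtx_rot b δ (k : ℕ) (by omega)]
  · rintro ⟨k, hk, rfl⟩
    have hkv : (k : ℕ) ≠ 0 := (fin_ne_zero_iff k).1 hk
    have hkl : (k : ℕ) < m + 2 := k.isLt
    refine ⟨⟨(k : ℕ) - 1, by omega⟩, by rw [fin_ne_last_iff]; simp; omega, ?_⟩
    show ℓ _ = ℓ _
    rw [show ((⟨(k : ℕ) - 1, by omega⟩ : Fin (m + 2)) : ℕ) = (k : ℕ) - 1 from rfl]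
    rw [vtx_rot b δ ((k : ℕ) - 1) (by omega)]
    have h9 : (k : ℕ) - 1 + 1 = (k : ℕ) := by omega
    rw [h9]

/-- image transfer for the backward rotation -/
lemma image_rot' {m N : ℕ} (ℓ : (Fin (m + 1) → ℕ) → ℕ) (b : Fin (m + 1) → ℕ)
    (δ : Equiv.Perm (Fin (m + 1))) (hb : b (δ.symm (Fin.last m)) ≠ 0) :
    Finset.image (gl ℓ (Function.update b (δ.symm (Fin.last m)) (b (δ.symm (Fin.last m)) - 1),
        δ.trans (finRotate (m + 1)))) (Finset.univ.erase 0)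
      = Finset.image (gl ℓ (b, δ)) (Finset.univ.erase (Fin.last (m + 1))) := by
  ext v
  simp only [Finset.mem_image, Finset.mem_erase, Finset.mem_univ, and_true]
  constructor
  · rintro ⟨k, hk, rfl⟩
    have hkv : (k : ℕ) ≠ 0 := (fin_ne_zero_iff k).1 hk
    have hkl : (k : ℕ) < m + 2 := k.isLt
    refine ⟨⟨(k : ℕ) - 1, by omega⟩, by rw [fin_ne_last_iff]; simp; omega, ?_⟩
    show ℓ _ = ℓ _
    rw [show ((⟨(k : ℕ) - 1, by omega⟩ : Fin (m + 2)) : ℕ) = (k : ℕ) - 1 from rfl]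
    rw [← vtx_rot' b δ hb ((k : ℕ) - 1) (by omega)]
    have h9 : (k : ℕ) - 1 + 1 = (k : ℕ) := by omega
    rw [h9]
  · rintro ⟨k, hk, rfl⟩
    have hkv : (k : ℕ) ≠ m + 1 := (fin_ne_last_iff k).1 hk
    have hkl : (k : ℕ) < m + 2 := k.isLt
    refine ⟨⟨(k : ℕ) + 1, by omega⟩, by rw [fin_ne_zero_iff]; simp, ?_⟩
    show ℓ _ = ℓ _
    rw [show ((⟨(k : ℕ) + 1, by omega⟩ : Fin (m + 2)) : ℕ) = (k : ℕ) + 1 from rfl]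
    rw [vtx_rot' b δ hb (k : ℕ) (by omega)]

lemma vtx_snoc {m : ℕ} (b₀ : Fin m → ℕ) (δ₀ : Equiv.Perm (Fin m)) (j : ℕ) (hj : j ≤ m) :
    vtx (Fin.snoc b₀ 0) (permUp δ₀) j = Fin.snoc (vtx b₀ δ₀ j) 0 := by
  funext i
  cases i using Fin.lastCases with
  | last =>
    unfold vtx
    rw [Fin.snoc_last, Fin.snoc_last, permUp_last]
    simp only [Fin.val_last]
    rw [if_neg (by omega)]
  | cast i =>
    unfold vtx
    rw [Fin.snoc_castSucc, Fin.snoc_castSucc, permUp_castSucc, Fin.coe_castSucc]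

/-- image transfer for the face bijection -/
lemma image_snoc {m N : ℕ} (ℓ : (Fin (m + 1) → ℕ) → ℕ) (b₀ : Fin m → ℕ)
    (δ₀ : Equiv.Perm (Fin m)) :
    Finset.image (gl ℓ (Fin.snoc b₀ 0, permUp δ₀)) (Finset.univ.erase (Fin.last (m + 1)))
      = Finset.image (gl (fun x => ℓ (Fin.snoc x 0)) (b₀, δ₀)) Finset.univ := by
  ext v
  simp only [Finset.mem_image, Finset.mem_erase, Finset.mem_univ, and_true, true_and]
  constructor
  · rintro ⟨k, hk, rfl⟩
    have hkv : (k : ℕ) ≠ m + 1 := (fin_ne_last_iff k).1 hk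
    have hkl : (k : ℕ) < m + 2 := k.isLt
    refine ⟨⟨(k : ℕ), by omega⟩, ?_⟩
    show ℓ _ = ℓ _
    rw [show ((⟨(k : ℕ), by omega⟩ : Fin (m + 1)) : ℕ) = (k : ℕ) from rfl]
    rw [vtx_snoc b₀ δ₀ (k : ℕ) (by omega)]
  · rintro ⟨k, rfl⟩
    have hkl : (k : ℕ) < m + 1 := k.isLt
    refine ⟨⟨(k : ℕ), by omega⟩, by rw [fin_ne_last_iff]; simp; omega, ?_⟩
    show ℓ _ = ℓ _
    rw [show ((⟨(k : ℕ), by omega⟩ : Fin (m + 2)) : ℕ) = (k : ℕ) from rfl]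
    rw [vtx_snoc b₀ δ₀ (k : ℕ) (by omega)]

lemma zmod2_cast (a : ℕ) : ((a : ℕ) : ZMod 2) = ((a % 2 : ℕ) : ZMod 2) := by
  conv_lhs => rw [← Nat.mod_add_div a 2]
  push_cast
  have h : (2 : ZMod 2) = 0 := rfl
  rw [h, zero_mul, add_zero]

theorem FL_odd : ∀ (n N : ℕ), 0 < N → ∀ ℓ : (Fin n → ℕ) → ℕ,
    (∀ x : Fin n → ℕ, (∀ i, x i ≤ N) → ℓ x ≤ n) →
    (∀ x : Fin n → ℕ, (∀ i, x i ≤ N) → ∀ i : Fin n, x i = 0 → ℓ x ≤ (i : ℕ)) →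
    (∀ x : Fin n → ℕ, (∀ i, x i ≤ N) → ∀ i : Fin n, x i = N → ℓ x ≠ (i : ℕ)) →
    ((FL n N ℓ : ZMod 2) = 1) := by
  intro n
  induction n with
  | zero =>
    intro N hN ℓ h1 h2 h3
    have hfull : ∀ p ∈ simps 0 N, isFull (gl ℓ p) := by
      intro p _ v hv
      rw [Finset.mem_range, Nat.lt_one_iff] at hv
      subst hv
      refine Finset.mem_image.2 ⟨0, Finset.mem_univ _, ?_⟩
      have h := h1 (vtx p.1 p.2 ((0 : Fin 1) : ℕ)) (fun i => i.elim0)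
      show ℓ (vtx p.1 p.2 ((0 : Fin 1) : ℕ)) = 0
      omega
    rw [FL, Finset.filter_true_of_mem hfull]
    have hcard : (simps 0 N).card = 1 := by
      rw [simps, Finset.card_product, baseSet]
      simp [Fintype.card_piFinset]
    rw [hcard]
    rfl
  | succ m ih =>
    intro N hN ℓ h1 h2 h3
    classical
    set ℓ' : (Fin m → ℕ) → ℕ := fun x => ℓ (Fin.snoc x 0) with hℓ'
    have hbound : ∀ p ∈ simps (m+1) N, ∀ k : Fin (m+2), gl ℓ p k ≤ m + 1 := by
      intro p hp k
      exact h1 _ (fun i => vtx_grid ((mem_simps p).1 hp) p.2 _ i)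
    set DD := Dset (m+1) N ℓ with hDD
    -- Step A : total doors ≡ full simplices
    have hA : ((DD).card : ZMod 2) = (FL (m+1) N ℓ : ZMod 2) := by
      have h0 : DD.card
          = ∑ p ∈ simps (m+1) N, (DD.filter (fun q => q.1 = p)).card := by
        apply Finset.card_eq_sum_card_fiberwise
        intro q hq
        rw [hDD, Dset, Finset.mem_coe, Finset.mem_filter, Finset.mem_product] at hq
        exact Finset.mem_coe.2 hq.1.1
      have h5 : ∀ p ∈ simps (m+1) N, (DD.filter (fun q => q.1 = p)).card
          = (Finset.univ.filter (fun k => isDoor (gl ℓ p) k)).card := by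
        intro p hp
        refine Finset.card_bij' (fun q _ => q.2) (fun k _ => (p, k)) ?_ ?_ ?_ ?_
        · intro q hq
          rw [Finset.mem_filter] at hq
          obtain ⟨hq1, hq2⟩ := hq
          rw [hDD, mem_Dset] at hq1
          rw [Finset.mem_filter]
          subst hq2
          exact ⟨Finset.mem_univ _, hq1.2⟩
        · intro k hk
          rw [Finset.mem_filter] at hk ⊢
          refine ⟨?_, rfl⟩
          rw [hDD, mem_Dset]
          exact ⟨(mem_simps p).1 hp, hk.2⟩
        · intro q hq
          rw [Finset.mem_filter] at hq
          exact Prod.ext hq.2.symm rfl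
        · intro k _; rfl
      rw [h0, Nat.cast_sum]
      calc (∑ p ∈ simps (m+1) N, ((DD.filter (fun q => q.1 = p)).card : ZMod 2))
          = ∑ p ∈ simps (m+1) N, (if isFull (gl ℓ p) then (1 : ZMod 2) else 0) := by
            apply Finset.sum_congr rfl
            intro p hp
            rw [h5 p hp, zmod2_cast, doors_card_mod_two (gl ℓ p) (hbound p hp)]
            split_ifs <;> rfl
        _ = (((simps (m+1) N).filter (fun p => isFull (gl ℓ p))).card : ZMod 2) :=
            Finset.sum_boole _ _
    set D0 := DD.filter (fun q => q.2 = 0) with hD0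
    set Dnz := DD.filter (fun q => ¬ q.2 = 0) with hDnz
    set Dl := Dnz.filter (fun q => q.2 = Fin.last (m+1)) with hDl
    set Dmid := Dnz.filter (fun q => ¬ q.2 = Fin.last (m+1)) with hDmid
    set Dbd := Dl.filter (fun q => q.1.1 (q.1.2.symm (Fin.last m)) = 0) with hDbd
    set Dint := Dl.filter (fun q => ¬ q.1.1 (q.1.2.symm (Fin.last m)) = 0) with hDint
    have hsplit1 : D0.card + Dnz.card = DD.card :=
      Finset.card_filter_add_card_filter_not _
    have hsplit2 : Dl.card + Dmid.card = Dnz.card :=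
      Finset.card_filter_add_card_filter_not _
    have hsplit3 : Dbd.card + Dint.card = Dl.card :=
      Finset.card_filter_add_card_filter_not _
    have hmemMid : ∀ q, q ∈ Dmid ↔
        (((∀ i, q.1.1 i < N) ∧ isDoor (gl ℓ q.1) q.2) ∧ q.2 ≠ 0 ∧ q.2 ≠ Fin.last (m+1)) := by
      intro q
      rw [hDmid, Finset.mem_filter, hDnz, Finset.mem_filter, hDD, mem_Dset]
      tauto
    have hmemD0 : ∀ q, q ∈ D0 ↔
        (((∀ i, q.1.1 i < N) ∧ isDoor (gl ℓ q.1) q.2) ∧ q.2 = 0) := by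
      intro q
      rw [hD0, Finset.mem_filter, hDD, mem_Dset]
    have hmemDint : ∀ q, q ∈ Dint ↔
        ((((∀ i, q.1.1 i < N) ∧ isDoor (gl ℓ q.1) q.2) ∧ q.2 = Fin.last (m+1))
          ∧ q.1.1 (q.1.2.symm (Fin.last m)) ≠ 0) := by
      intro q
      rw [hDint, Finset.mem_filter, hDl, Finset.mem_filter, hDnz, Finset.mem_filter,
        hDD, mem_Dset]
      constructor
      · rintro ⟨⟨⟨⟨ha, hb⟩, -⟩, hc⟩, hd⟩; exact ⟨⟨⟨ha, hb⟩, hc⟩, hd⟩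
      · rintro ⟨⟨⟨ha, hb⟩, hc⟩, hd⟩
        refine ⟨⟨⟨⟨ha, hb⟩, ?_⟩, hc⟩, hd⟩
        rw [hc]
        intro h9
        have h8 := congrArg Fin.val h9
        simp [Fin.val_last] at h8
    have hmemDbd : ∀ q, q ∈ Dbd ↔
        ((((∀ i, q.1.1 i < N) ∧ isDoor (gl ℓ q.1) q.2) ∧ q.2 = Fin.last (m+1))
          ∧ q.1.1 (q.1.2.symm (Fin.last m)) = 0) := by
      intro q
      rw [hDbd, Finset.mem_filter, hDl, Finset.mem_filter, hDnz, Finset.mem_filter,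
        hDD, mem_Dset]
      constructor
      · rintro ⟨⟨⟨⟨ha, hb⟩, -⟩, hc⟩, hd⟩; exact ⟨⟨⟨ha, hb⟩, hc⟩, hd⟩
      · rintro ⟨⟨⟨ha, hb⟩, hc⟩, hd⟩
        refine ⟨⟨⟨⟨ha, hb⟩, ?_⟩, hc⟩, hd⟩
        rw [hc]
        intro h9
        have h8 := congrArg Fin.val h9
        simp [Fin.val_last] at h8
    -- Step C : middle doors pair up
    have hmid : (Dmid.card : ZMod 2) = 0 := by
      have hev : Dmid.card % 2 = 0 := by
        apply even_card_of_invol Dmid (fun q =>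
          if h : 1 ≤ (q.2 : ℕ) ∧ (q.2 : ℕ) ≤ m then
            ((q.1.1, q.1.2.trans (Equiv.swap ⟨(q.2 : ℕ) - 1, by omega⟩
              ⟨(q.2 : ℕ), by omega⟩)), q.2)
          else q)
        · intro q hq
          have hq' := (hmemMid q).1 hq
          obtain ⟨⟨hb, hdoor⟩, hne0, hnel⟩ := hq'
          have hcond : 1 ≤ (q.2 : ℕ) ∧ (q.2 : ℕ) ≤ m := by
            have := q.2.isLt
            have h01 := (fin_ne_zero_iff q.2).1 hne0
            have h02 := (fin_ne_last_iff q.2).1 hnel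
            omega
          rw [dif_pos hcond]
          rw [hmemMid]
          refine ⟨⟨hb, ?_⟩, hne0, hnel⟩
          have himg : Finset.image (gl ℓ (q.1.1, q.1.2.trans (Equiv.swap
              ⟨(q.2 : ℕ) - 1, by omega⟩ ⟨(q.2 : ℕ), by omega⟩))) (Finset.univ.erase q.2)
              = Finset.image (gl ℓ q.1) (Finset.univ.erase q.2) := by
            apply Finset.image_congr
            intro k' hk'
            rw [Finset.mem_coe, Finset.mem_erase] at hk'
            show ℓ _ = ℓ _
            rw [vtx_swap q.1.1 q.1.2 _ _ (by simp; omega) (k' : ℕ)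
              (by intro hcc; exact hk'.1 (Fin.ext (by rw [hcc]))) ]
          unfold isDoor
          rw [himg]
          exact hdoor
        · intro q hq
          have hq' := (hmemMid q).1 hq
          obtain ⟨⟨hb, hdoor⟩, hne0, hnel⟩ := hq'
          have hcond : 1 ≤ (q.2 : ℕ) ∧ (q.2 : ℕ) ≤ m := by
            have := q.2.isLt
            have h01 := (fin_ne_zero_iff q.2).1 hne0
            have h02 := (fin_ne_last_iff q.2).1 hnel
            omega
          rw [dif_pos hcond, dif_pos hcond]
          have hperm : ((q.1.2.trans (Equiv.swap ⟨(q.2 : ℕ) - 1, by omega⟩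
              ⟨(q.2 : ℕ), by omega⟩)).trans (Equiv.swap ⟨(q.2 : ℕ) - 1, by omega⟩
              ⟨(q.2 : ℕ), by omega⟩)) = q.1.2 := by
            apply Equiv.ext
            intro i
            simp [Equiv.trans_apply, Equiv.swap_apply_self]
          rw [hperm]
        · intro q hq
          have hq' := (hmemMid q).1 hq
          obtain ⟨⟨hb, hdoor⟩, hne0, hnel⟩ := hq'
          have hcond : 1 ≤ (q.2 : ℕ) ∧ (q.2 : ℕ) ≤ m := by
            have := q.2.isLt
            have h01 := (fin_ne_zero_iff q.2).1 hne0
            have h02 := (fin_ne_last_iff q.2).1 hnel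
            omega
          rw [dif_pos hcond]
          intro hcc
          have hE : q.1.2.trans (Equiv.swap ⟨(q.2 : ℕ) - 1, by omega⟩
              ⟨(q.2 : ℕ), by omega⟩) = q.1.2 := by
            have := congrArg (fun z => z.1.2) hcc
            exact this
          set x : Fin (m+1) := ⟨(q.2 : ℕ) - 1, by omega⟩
          set y : Fin (m+1) := ⟨(q.2 : ℕ), by omega⟩
          have h9 := congrFun (congrArg (fun (e : Equiv.Perm (Fin (m+1))) => (e : Fin (m+1) → Fin (m+1))) hE) (q.1.2.symm x)
          simp only [Equiv.trans_apply, Equiv.apply_symm_apply] at h9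
          rw [Equiv.swap_apply_left] at h9
          have : (y : ℕ) = (x : ℕ) := by rw [h9]
          simp only [x, y] at this
          omega
      rw [zmod2_cast, hev]
      rfl
    -- Step D : no boundary doors at k = 0
    have hD0b : ∀ q ∈ D0, q.1.1 (q.1.2.symm 0) + 1 < N := by
      intro q hq
      obtain ⟨⟨hb, hdoor⟩, hk0⟩ := (hmemD0 q).1 hq
      rw [hk0] at hdoor
      by_contra hcon
      push_neg at hcon
      have hbi : q.1.1 (q.1.2.symm 0) = N - 1 := by have := hb (q.1.2.symm 0); omega
      have h01 : ((q.1.2.symm 0 : Fin (m+1)) : ℕ) ∈ Finset.range (m+1) :=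
        Finset.mem_range.2 (Fin.isLt _)
      obtain ⟨k', hk', hglk⟩ := Finset.mem_image.1 (hdoor h01)
      rw [Finset.mem_erase] at hk'
      have hkpos : (k' : ℕ) ≠ 0 := (fin_ne_zero_iff k').1 hk'.1
      have hx : vtx q.1.1 q.1.2 (k' : ℕ) (q.1.2.symm 0) = N := by
        unfold vtx
        rw [Equiv.apply_symm_apply, Fin.val_zero, if_pos (by omega), hbi]
        omega
      exact h3 (vtx q.1.1 q.1.2 (k' : ℕ)) (fun i => vtx_grid hb q.1.2 _ i)
        (q.1.2.symm 0) hx hglk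
    -- Step E : bijection between doors at 0 and interior doors at last
    have hbij : D0.card = Dint.card := by
      refine Finset.card_bij'
        (fun q _ => ((Function.update q.1.1 (q.1.2.symm 0) (q.1.1 (q.1.2.symm 0) + 1),
          q.1.2.trans (finRotate (m + 1)).symm), Fin.last (m + 1)))
        (fun q _ => ((Function.update q.1.1 (q.1.2.symm (Fin.last m))
          (q.1.1 (q.1.2.symm (Fin.last m)) - 1), q.1.2.trans (finRotate (m + 1))),
          (0 : Fin (m + 2)))) ?_ ?_ ?_ ?_
      · intro q hq
        obtain ⟨⟨hb, hdoor⟩, hk0⟩ := (hmemD0 q).1 hq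
        rw [hk0] at hdoor
        rw [hmemDint]
        dsimp only
        have hidx : (q.1.2.trans (finRotate (m + 1)).symm).symm (Fin.last m)
            = q.1.2.symm 0 := by
          rw [Equiv.symm_trans_apply, Equiv.symm_symm, finRotate_last]
        refine ⟨⟨⟨?_, ?_⟩, rfl⟩, ?_⟩
        · intro i
          rcases eq_or_ne i (q.1.2.symm 0) with hEq | hne
          · rw [hEq, Function.update_self]
            exact hD0b q hq
          · rw [Function.update_of_ne hne]
            exact hb i
        · show isDoor _ _
          unfold isDoor
          rw [image_rot (N := N)]
          exact hdoor
        · show Function.update q.1.1 (q.1.2.symm 0) (q.1.1 (q.1.2.symm 0) + 1)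
            ((q.1.2.trans (finRotate (m + 1)).symm).symm (Fin.last m)) ≠ 0
          rw [hidx, Function.update_self]
          omega
      · intro q hq
        obtain ⟨⟨⟨hb, hdoor⟩, hkl⟩, hbnz⟩ := (hmemDint q).1 hq
        rw [hkl] at hdoor
        rw [hmemD0]
        dsimp only
        refine ⟨⟨?_, ?_⟩, rfl⟩
        · intro i
          rcases eq_or_ne i (q.1.2.symm (Fin.last m)) with hEq | hne
          · rw [hEq, Function.update_self]
            have := hb (q.1.2.symm (Fin.last m))
            omega
          · rw [Function.update_of_ne hne]
            exact hb i
        · show isDoor _ _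
          unfold isDoor
          rw [image_rot' (N := N) ℓ q.1.1 q.1.2 hbnz]
          exact hdoor
      · intro q hq
        dsimp only
        obtain ⟨⟨hb, hdoor⟩, hk0⟩ := (hmemD0 q).1 hq
        have hidx : (q.1.2.trans (finRotate (m + 1)).symm).symm (Fin.last m)
            = q.1.2.symm 0 := by
          rw [Equiv.symm_trans_apply, Equiv.symm_symm, finRotate_last]
        have hperm : (q.1.2.trans (finRotate (m + 1)).symm).trans (finRotate (m + 1))
            = q.1.2 := by
          apply Equiv.ext
          intro i
          simp only [Equiv.trans_apply]
          exact Equiv.apply_symm_apply _ _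
        have hbase : Function.update
            (Function.update q.1.1 (q.1.2.symm 0) (q.1.1 (q.1.2.symm 0) + 1))
            ((q.1.2.trans (finRotate (m + 1)).symm).symm (Fin.last m))
            (Function.update q.1.1 (q.1.2.symm 0) (q.1.1 (q.1.2.symm 0) + 1)
              ((q.1.2.trans (finRotate (m + 1)).symm).symm (Fin.last m)) - 1)
            = q.1.1 := by
          rw [hidx, Function.update_self, Function.update_idem]
          have : q.1.1 (q.1.2.symm 0) + 1 - 1 = q.1.1 (q.1.2.symm 0) := by omega
          rw [this, Function.update_eq_self]
        refine Prod.ext (Prod.ext ?_ ?_) ?_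
        · exact hbase
        · exact hperm
        · exact hk0.symm
      · intro q hq
        dsimp only
        obtain ⟨⟨⟨hb, hdoor⟩, hkl⟩, hbnz⟩ := (hmemDint q).1 hq
        have hidx : (q.1.2.trans (finRotate (m + 1))).symm 0 = q.1.2.symm (Fin.last m) := by
          rw [Equiv.symm_trans_apply, finRotate_symm_zero]
        have hperm : (q.1.2.trans (finRotate (m + 1))).trans (finRotate (m + 1)).symm
            = q.1.2 := by
          apply Equiv.ext
          intro i
          simp only [Equiv.trans_apply]
          exact Equiv.symm_apply_apply _ _
        have hbase : Function.update
            (Function.update q.1.1 (q.1.2.symm (Fin.last m))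
              (q.1.1 (q.1.2.symm (Fin.last m)) - 1))
            ((q.1.2.trans (finRotate (m + 1))).symm 0)
            (Function.update q.1.1 (q.1.2.symm (Fin.last m))
              (q.1.1 (q.1.2.symm (Fin.last m)) - 1)
              ((q.1.2.trans (finRotate (m + 1))).symm 0) + 1)
            = q.1.1 := by
          rw [hidx, Function.update_self, Function.update_idem]
          have : q.1.1 (q.1.2.symm (Fin.last m)) - 1 + 1
              = q.1.1 (q.1.2.symm (Fin.last m)) := by omega
          rw [this, Function.update_eq_self]
        refine Prod.ext (Prod.ext ?_ ?_) ?_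
        · exact hbase
        · exact hperm
        · exact hkl.symm
    -- Step F : boundary doors at last correspond to full simplices in dim m
    have hbd_char : ∀ q ∈ Dbd, q.1.2 (Fin.last m) = Fin.last m ∧ q.1.1 (Fin.last m) = 0 := by
      intro q hq
      obtain ⟨⟨⟨hb, hdoor⟩, hkl⟩, hb0⟩ := (hmemDbd q).1 hq
      rw [hkl] at hdoor
      have h01 : (m : ℕ) ∈ Finset.range (m+1) := Finset.mem_range.2 (by omega)
      obtain ⟨k', hk', hglk⟩ := Finset.mem_image.1 (hdoor h01)
      rw [Finset.mem_erase] at hk'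
      have hkv : (k' : ℕ) ≤ m := by
        have h9 := (fin_ne_last_iff k').1 hk'.1
        have := k'.isLt
        omega
      have hx0 : vtx q.1.1 q.1.2 (k' : ℕ) (q.1.2.symm (Fin.last m)) = 0 := by
        unfold vtx
        rw [Equiv.apply_symm_apply, Fin.val_last, if_neg (by omega), hb0]
      have hle := h2 (vtx q.1.1 q.1.2 (k' : ℕ)) (fun i => vtx_grid hb q.1.2 _ i)
        (q.1.2.symm (Fin.last m)) hx0
      have hlx : ℓ (vtx q.1.1 q.1.2 (k' : ℕ)) = m := hglk
      have hval : ((q.1.2.symm (Fin.last m) : Fin (m+1)) : ℕ) = m := by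
        have := (q.1.2.symm (Fin.last m)).isLt
        omega
      have hi₁ : q.1.2.symm (Fin.last m) = Fin.last m :=
        Fin.ext (by rw [hval, Fin.val_last])
      constructor
      · conv_lhs => rw [← hi₁]
        rw [Equiv.apply_symm_apply]
      · rw [← hi₁]
        exact hb0
    have hFbd : Dbd.card = FL m N ℓ' := by
      rw [FL]
      refine Finset.card_bij'
        (fun q hq => (q.1.1 ∘ Fin.castSucc, permDown q.1.2 (hbd_char q hq).1))
        (fun p _ => ((Fin.snoc p.1 0, permUp p.2), Fin.last (m + 1))) ?_ ?_ ?_ ?_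
      · intro q hq
        obtain ⟨⟨⟨hb, hdoor⟩, hkl⟩, hb0⟩ := (hmemDbd q).1 hq
        rw [hkl] at hdoor
        rw [Finset.mem_filter, mem_simps]
        have hrec : Fin.snoc (q.1.1 ∘ Fin.castSucc) (0:ℕ) = q.1.1 := by
          funext i
          cases i using Fin.lastCases with
          | last => rw [Fin.snoc_last, (hbd_char q hq).2]
          | cast i => rw [Fin.snoc_castSucc]; rfl
        have hδrec : permUp (permDown q.1.2 (hbd_char q hq).1) = q.1.2 :=
          permUp_permDown _ _
        constructor
        · intro i
          exact hb (Fin.castSucc i)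
        · show isFull _
          unfold isFull
          rw [← image_snoc (N := N)]
          rw [hrec, hδrec]
          have hpair : ((q.1.1, q.1.2) : (Fin (m+1) → ℕ) × Equiv.Perm (Fin (m+1))) = q.1 :=
            Prod.ext rfl rfl
          rw [hpair]
          exact hdoor
      · intro p hp
        rw [Finset.mem_filter, mem_simps] at hp
        obtain ⟨hp1, hp2⟩ := hp
        rw [hmemDbd]
        dsimp only
        refine ⟨⟨⟨?_, ?_⟩, rfl⟩, ?_⟩
        · intro i
          cases i using Fin.lastCases with
          | last => rw [Fin.snoc_last]; exact hN
          | cast i => rw [Fin.snoc_castSucc]; exact hp1 i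
        · show isDoor _ _
          unfold isDoor
          rw [image_snoc (N := N)]
          exact hp2
        · show (Fin.snoc p.1 (0:ℕ) : Fin (m+1) → ℕ) ((permUp p.2).symm (Fin.last m)) = 0
          have hs : (permUp p.2).symm (Fin.last m) = Fin.last m := by
            rw [Equiv.symm_apply_eq, permUp_last]
          rw [hs]
          exact Fin.snoc_last _ _
      · intro q hq
        dsimp only
        obtain ⟨⟨⟨hb, hdoor⟩, hkl⟩, hb0⟩ := (hmemDbd q).1 hq
        have hrec : Fin.snoc (q.1.1 ∘ Fin.castSucc) (0:ℕ) = q.1.1 := by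
          funext i
          cases i using Fin.lastCases with
          | last => rw [Fin.snoc_last, (hbd_char q hq).2]
          | cast i => rw [Fin.snoc_castSucc]; rfl
        refine Prod.ext (Prod.ext ?_ ?_) ?_
        · exact hrec
        · exact permUp_permDown _ _
        · exact hkl.symm
      · intro p hp
        dsimp only
        refine Prod.ext ?_ ?_
        · funext i
          show (Fin.snoc p.1 (0:ℕ) : Fin (m+1) → ℕ) (Fin.castSucc i) = p.1 i
          exact Fin.snoc_castSucc _ _ _
        · apply permDown_permUp
          exact permUp_last _
    -- the induced labelling satisfies the hypotheses in dimension m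
    have hgrid' : ∀ x : Fin m → ℕ, (∀ i, x i ≤ N) → (∀ i, (Fin.snoc x (0:ℕ) : Fin (m+1) → ℕ) i ≤ N) := by
      intro x hx i
      cases i using Fin.lastCases with
      | last => rw [Fin.snoc_last]; omega
      | cast i => rw [Fin.snoc_castSucc]; exact hx i
    have h1' : ∀ x : Fin m → ℕ, (∀ i, x i ≤ N) → ℓ' x ≤ m := by
      intro x hx
      have := h2 (Fin.snoc x 0) (hgrid' x hx) (Fin.last m) (Fin.snoc_last _ _)
      rw [Fin.val_last] at this
      exact this
    have h2' : ∀ x : Fin m → ℕ, (∀ i, x i ≤ N) → ∀ i : Fin m, x i = 0 → ℓ' x ≤ (i : ℕ) := by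
      intro x hx i hxi
      have := h2 (Fin.snoc x 0) (hgrid' x hx) (Fin.castSucc i)
        (by rw [Fin.snoc_castSucc]; exact hxi)
      rw [Fin.coe_castSucc] at this
      exact this
    have h3' : ∀ x : Fin m → ℕ, (∀ i, x i ≤ N) → ∀ i : Fin m, x i = N → ℓ' x ≠ (i : ℕ) := by
      intro x hx i hxi
      have := h3 (Fin.snoc x 0) (hgrid' x hx) (Fin.castSucc i)
        (by rw [Fin.snoc_castSucc]; exact hxi)
      rw [Fin.coe_castSucc] at this
      exact this
    have hIH := ih N hN ℓ' h1' h2' h3'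
    -- assemble
    have hnat : DD.card = Dbd.card + (D0.card + D0.card) + Dmid.card := by omega
    rw [← hA, hnat]
    push_cast
    rw [hmid, hFbd, hIH]
    have hcc : ∀ c : ZMod 2, c + c = 0 := by decide
    rw [hcc]
    ring

theorem exists_full (n N : ℕ) (hN : 0 < N) (ℓ : (Fin n → ℕ) → ℕ)
    (h1 : ∀ x : Fin n → ℕ, (∀ i, x i ≤ N) → ℓ x ≤ n)
    (h2 : ∀ x : Fin n → ℕ, (∀ i, x i ≤ N) → ∀ i : Fin n, x i = 0 → ℓ x ≤ (i : ℕ))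
    (h3 : ∀ x : Fin n → ℕ, (∀ i, x i ≤ N) → ∀ i : Fin n, x i = N → ℓ x ≠ (i : ℕ)) :
    ∃ p : (Fin n → ℕ) × Equiv.Perm (Fin n), (∀ i, p.1 i < N) ∧ isFull (gl ℓ p) := by
  have h := FL_odd n N hN ℓ h1 h2 h3
  have hpos : 0 < FL n N ℓ := by
    by_contra hc
    push_neg at hc
    have h0 : FL n N ℓ = 0 := Nat.le_zero.1 hc
    rw [h0] at h
    simp at h
  rw [FL, Finset.card_pos] at hpos
  obtain ⟨p, hp⟩ := hpos
  rw [Finset.mem_filter] at hp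
  exact ⟨p, (mem_simps p).1 hp.1, hp.2⟩
def cube (n : ℕ) (B : ℝ) : Set (EuclideanSpace ℝ (Fin n)) := {x | ∀ i, x i ∈ Set.Icc 0 B}

def faceNeg (n : ℕ) (B : ℝ) (i : Fin n) : Set (EuclideanSpace ℝ (Fin n)) :=
  {x | x ∈ cube n B ∧ x i = 0}

def facePos (n : ℕ) (B : ℝ) (i : Fin n) : Set (EuclideanSpace ℝ (Fin n)) :=
  {x | x ∈ cube n B ∧ x i = B}

/-- grid point -/
noncomputable def mpt (n N : ℕ) (v : Fin n → ℕ) : EuclideanSpace ℝ (Fin n) :=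
  WithLp.toLp 2 (fun i => (v i : ℝ) / N)

open Classical in
/-- Miranda labelling -/
noncomputable def mlab (n N : ℕ) (f : Fin n → EuclideanSpace ℝ (Fin n) → ℝ)
    (v : Fin n → ℕ) : ℕ :=
  if h : ∃ j : ℕ, ∃ hj : j < n, (v ⟨j, hj⟩ = 0 ∨ (v ⟨j, hj⟩ ≠ N ∧ f ⟨j, hj⟩ (mpt n N v) ≤ 0))
  then Nat.find h else n

@[simp] lemma mpt_apply {n N : ℕ} (v : Fin n → ℕ) (i : Fin n) :
    mpt n N v i = (v i : ℝ) / N := rfl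

lemma mpt_mem_cube {n N : ℕ} (hN : 0 < N) {v : Fin n → ℕ} (hv : ∀ i, v i ≤ N) :
    mpt n N v ∈ cube n 1 := by
  intro i
  have hN' : (0:ℝ) < N := by exact_mod_cast hN
  simp only [mpt_apply, Set.mem_Icc]
  constructor
  · positivity
  · rw [div_le_one hN']
    exact_mod_cast hv i

lemma dist_mpt_le {n N : ℕ} (hN : 0 < N) {v u : Fin n → ℕ}
    (h : ∀ i, v i ≤ u i + 1 ∧ u i ≤ v i + 1) :
    dist (mpt n N v) (mpt n N u) ≤ Real.sqrt n / N := by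
  have hN' : (0:ℝ) < N := by exact_mod_cast hN
  rw [EuclideanSpace.dist_eq]
  have hb : ∀ i : Fin n, dist (mpt n N v i) (mpt n N u i) ^ 2 ≤ (1 / N) ^ 2 := by
    intro i
    have h2 : (v i : ℝ) ≤ (u i : ℝ) + 1 := by exact_mod_cast (h i).1
    have h3 : (u i : ℝ) ≤ (v i : ℝ) + 1 := by exact_mod_cast (h i).2
    have h1 : |((v i : ℝ) / N - (u i : ℝ) / N)| ≤ 1 / N := by
      rw [← sub_div, abs_div, abs_of_pos hN']
      gcongr
      rw [abs_le]
      constructor <;> linarith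
    have h5 : dist (mpt n N v i) (mpt n N u i) = |((v i : ℝ) / N - (u i : ℝ) / N)| := by
      rw [mpt_apply, mpt_apply, Real.dist_eq]
    rw [h5]
    exact pow_le_pow_left₀ (abs_nonneg _) h1 2
  calc Real.sqrt (∑ i, dist (mpt n N v i) (mpt n N u i) ^ 2)
      ≤ Real.sqrt (∑ _i : Fin n, (1 / (N:ℝ)) ^ 2) := by
        apply Real.sqrt_le_sqrt
        exact Finset.sum_le_sum (fun i _ => hb i)
    _ = Real.sqrt n / N := by
        rw [Finset.sum_const, Finset.card_univ, Fintype.card_fin, nsmul_eq_mul,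
          Real.sqrt_mul (by positivity), Real.sqrt_sq (by positivity), mul_one_div]

lemma vtx_le_grid {n N : ℕ} {b : Fin n → ℕ} (hb : ∀ i, b i < N) (δ : Equiv.Perm (Fin n))
    (k : ℕ) (i : Fin n) : vtx b δ k i ≤ N := by
  unfold vtx; have := hb i; split <;> omega

lemma vtx_close {n : ℕ} (b : Fin n → ℕ) (δ : Equiv.Perm (Fin n)) (k k' : ℕ) (i : Fin n) :
    vtx b δ k i ≤ vtx b δ k' i + 1 ∧ vtx b δ k' i ≤ vtx b δ k i + 1 := by
  unfold vtx; constructor <;> (split <;> split <;> omega)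

lemma isClosed_cube (n : ℕ) (B : ℝ) : IsClosed (cube n B) := by
  have : cube n B = ⋂ i, (fun x : EuclideanSpace ℝ (Fin n) => x i) ⁻¹' (Set.Icc 0 B) := by
    ext x; simp [cube, Set.mem_iInter]
  rw [this]
  exact isClosed_iInter fun i =>
    (isClosed_Icc).preimage (EuclideanSpace.proj i).continuous

lemma isCompact_cube (n : ℕ) : IsCompact (cube n 1) := by
  apply Metric.isCompact_of_isClosed_isBounded (isClosed_cube n 1)
  rw [Metric.isBounded_iff_subset_closedBall 0]
  refine ⟨Real.sqrt n, fun x hx => ?_⟩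
  rw [Metric.mem_closedBall, EuclideanSpace.dist_eq]
  have hb : ∀ i : Fin n, dist (x i) ((0 : EuclideanSpace ℝ (Fin n)) i) ^ 2 ≤ 1 := by
    intro i
    have h1 := hx i
    rw [Set.mem_Icc] at h1
    have h2 : dist (x i) ((0 : EuclideanSpace ℝ (Fin n)) i) = |x i| := by
      show dist (x i) 0 = _
      rw [Real.dist_eq, sub_zero]
    rw [h2]
    have : |x i| ≤ 1 := by rw [abs_le]; constructor <;> linarith
    calc |x i| ^ 2 ≤ 1 ^ 2 := pow_le_pow_left₀ (abs_nonneg _) this 2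
      _ = 1 := one_pow 2
  calc Real.sqrt (∑ i, dist (x i) ((0 : EuclideanSpace ℝ (Fin n)) i) ^ 2)
      ≤ Real.sqrt (∑ _i : Fin n, (1:ℝ)) := by
        apply Real.sqrt_le_sqrt
        exact Finset.sum_le_sum fun i _ => hb i
    _ = Real.sqrt n := by rw [Finset.sum_const, Finset.card_univ, Fintype.card_fin,
        nsmul_eq_mul, mul_one]

theorem miranda (n : ℕ) (f : Fin n → EuclideanSpace ℝ (Fin n) → ℝ)
    (hf : ∀ i, ContinuousOn (f i) (cube n 1))
    (hpos : ∀ i x, x ∈ facePos n 1 i → 0 ≤ f i x)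
    (hneg : ∀ i x, x ∈ faceNeg n 1 i → f i x ≤ 0) :
    ∃ x ∈ cube n 1, ∀ i, f i x = 0 := by
  classical
  -- the per-scale approximate zero
  have key : ∀ N : ℕ, 0 < N → ∃ (y : EuclideanSpace ℝ (Fin n))
      (z : Fin n → EuclideanSpace ℝ (Fin n)),
      y ∈ cube n 1 ∧ (∀ i, z i ∈ cube n 1) ∧ (∀ i, 0 ≤ f i y) ∧ (∀ i, f i (z i) ≤ 0) ∧
      (∀ i, dist (z i) y ≤ Real.sqrt n / N) := by
    intro N hN
    set ℓ : (Fin n → ℕ) → ℕ := mlab n N f with hℓdef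
    have hP : ∀ v : Fin n → ℕ,
        ℓ v = if h : ∃ j : ℕ, ∃ hj : j < n,
          (v ⟨j, hj⟩ = 0 ∨ (v ⟨j, hj⟩ ≠ N ∧ f ⟨j, hj⟩ (mpt n N v) ≤ 0))
        then Nat.find h else n := fun v => by rw [hℓdef]; rfl
    have h1 : ∀ x : Fin n → ℕ, (∀ i, x i ≤ N) → ℓ x ≤ n := by
      intro x _
      rw [hP]
      split
      · next h =>
        obtain ⟨hj, -⟩ := Nat.find_spec h
        omega
      · exact le_refl n
    have h2 : ∀ x : Fin n → ℕ, (∀ i, x i ≤ N) → ∀ i : Fin n, x i = 0 → ℓ x ≤ (i : ℕ) := by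
      intro x _ i hxi
      have hPi : ∃ j : ℕ, ∃ hj : j < n,
          (x ⟨j, hj⟩ = 0 ∨ (x ⟨j, hj⟩ ≠ N ∧ f ⟨j, hj⟩ (mpt n N x) ≤ 0)) :=
        ⟨(i : ℕ), i.isLt, Or.inl (by rw [Fin.eta]; exact hxi)⟩
      rw [hP, dif_pos hPi]
      exact Nat.find_le ⟨i.isLt, Or.inl (by rw [Fin.eta]; exact hxi)⟩
    have h3 : ∀ x : Fin n → ℕ, (∀ i, x i ≤ N) → ∀ i : Fin n, x i = N → ℓ x ≠ (i : ℕ) := by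
      intro x _ i hxi hcon
      rw [hP] at hcon
      revert hcon
      split
      · next h =>
        intro hcon
        have hspec := Nat.find_spec h
        rw [hcon] at hspec
        obtain ⟨hj, hor⟩ := hspec
        rw [Fin.eta] at hor
        rcases hor with h0 | ⟨hne, -⟩
        · omega
        · exact hne hxi
      · intro hcon
        have := i.isLt
        omega
    obtain ⟨p, hp, hfull⟩ := exists_full n N hN ℓ h1 h2 h3
    have hgrid : ∀ k : ℕ, ∀ i, vtx p.1 p.2 k i ≤ N := fun k i => vtx_le_grid hp p.2 k i
    -- vertex with label n
    have hnmem : (n : ℕ) ∈ Finset.image (gl ℓ p) Finset.univ :=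
      hfull (Finset.mem_range.2 (Nat.lt_succ_self n))
    obtain ⟨kn, -, hkn⟩ := Finset.mem_image.1 hnmem
    -- vertices with label i
    have hic : ∀ i : Fin n, ∃ k : Fin (n + 1), gl ℓ p k = (i : ℕ) := by
      intro i
      have : ((i : ℕ)) ∈ Finset.image (gl ℓ p) Finset.univ :=
        hfull (Finset.mem_range.2 (by have := i.isLt; omega))
      obtain ⟨k, -, hk⟩ := Finset.mem_image.1 this
      exact ⟨k, hk⟩
    choose kk hkk using hic
    refine ⟨mpt n N (vtx p.1 p.2 (kn : ℕ)), fun i => mpt n N (vtx p.1 p.2 (kk i : ℕ)),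
      mpt_mem_cube hN (hgrid _), fun i => mpt_mem_cube hN (hgrid _), ?_, ?_, ?_⟩
    · -- all f i nonneg at the n-labelled vertex
      intro i
      have hlab : ℓ (vtx p.1 p.2 (kn : ℕ)) = n := hkn
      rw [hP] at hlab
      revert hlab
      split
      · next h =>
        intro hlab
        obtain ⟨hj, -⟩ := Nat.find_spec h
        omega
      · next h =>
        intro _
        by_cases hN' : vtx p.1 p.2 (kn : ℕ) i = N
        · apply hpos i
          refine ⟨mpt_mem_cube hN (hgrid _), ?_⟩
          show mpt n N (vtx p.1 p.2 (kn : ℕ)) i = 1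
          rw [mpt_apply, hN']
          have hN9 : ((N:ℝ)) ≠ 0 := by positivity
          field_simp
        · by_contra hlt
          push_neg at hlt
          exact h ⟨(i : ℕ), i.isLt, Or.inr ⟨by rw [Fin.eta]; exact hN',
            by rw [Fin.eta]; linarith⟩⟩
    · -- f i nonpos at the i-labelled vertex
      intro i
      have hlab : ℓ (vtx p.1 p.2 (kk i : ℕ)) = (i : ℕ) := hkk i
      rw [hP] at hlab
      revert hlab
      split
      · next h =>
        intro hlab
        have hspec := Nat.find_spec h
        rw [hlab] at hspec
        obtain ⟨hj, hor⟩ := hspec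
        rw [Fin.eta] at hor
        rcases hor with h0 | ⟨-, hle⟩
        · apply hneg i
          refine ⟨mpt_mem_cube hN (hgrid _), ?_⟩
          show mpt n N (vtx p.1 p.2 (kk i : ℕ)) i = 0
          rw [mpt_apply, h0]
          simp
        · exact hle
      · intro hlab
        have := i.isLt
        omega
    · intro i
      exact dist_mpt_le hN (fun j => vtx_close p.1 p.2 _ _ j)
  -- pass to the limit
  choose Y Z hY hZ hfY hfZ hdist using fun N : ℕ => key (N + 1) (Nat.succ_pos N)
  obtain ⟨a, ha, φ, hφ, htend⟩ := (isCompact_cube n).tendsto_subseq hY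
  refine ⟨a, ha, fun i => ?_⟩
  have htends : Filter.Tendsto (fun j => Y (φ j)) Filter.atTop (nhds a) := htend
  have hge : 0 ≤ f i a := by
    have h1 : Filter.Tendsto (fun j => Y (φ j)) Filter.atTop (nhdsWithin a (cube n 1)) := by
      rw [tendsto_nhdsWithin_iff]
      exact ⟨htends, Filter.Eventually.of_forall fun j => hY _⟩
    have h2 : Filter.Tendsto (fun j => f i (Y (φ j))) Filter.atTop (nhds (f i a)) :=
      (hf i a ha).tendsto.comp h1
    exact ge_of_tendsto h2 (Filter.Eventually.of_forall fun j => hfY _ i)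
  have hdzero : Filter.Tendsto (fun j => dist (Z (φ j) i) a) Filter.atTop (nhds 0) := by
    have hb1 : ∀ j, dist (Z (φ j) i) a ≤ Real.sqrt n / ((j : ℝ) + 1) + dist (Y (φ j)) a := by
      intro j
      calc dist (Z (φ j) i) a ≤ dist (Z (φ j) i) (Y (φ j)) + dist (Y (φ j)) a :=
            dist_triangle _ _ _
        _ ≤ Real.sqrt n / ((j : ℝ) + 1) + dist (Y (φ j)) a := by
            have h4 := hdist (φ j) i
            have h5 : (Real.sqrt n) / ((φ j : ℝ) + 1) ≤ Real.sqrt n / ((j : ℝ) + 1) := by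
              have hj1 : (0:ℝ) < (j : ℝ) + 1 := by positivity
              have hj2 : ((j : ℝ) + 1) ≤ ((φ j : ℝ) + 1) := by
                have h8 : j ≤ φ j := hφ.le_apply
                have : (j : ℝ) ≤ (φ j : ℝ) := by exact_mod_cast h8
                linarith
              exact div_le_div_of_nonneg_left (Real.sqrt_nonneg n) hj1 hj2
            have h6 : ((φ j : ℕ) + 1 : ℝ) = ((φ j + 1 : ℕ) : ℝ) := by push_cast; ring
            rw [h6] at h5
            linarith [h4, h5]
    have hb2 : Filter.Tendsto (fun j : ℕ => Real.sqrt n / ((j : ℝ) + 1) + dist (Y (φ j)) a)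
        Filter.atTop (nhds 0) := by
      have hc1 : Filter.Tendsto (fun j : ℕ => Real.sqrt n / ((j : ℝ) + 1))
          Filter.atTop (nhds 0) := by
        apply Filter.Tendsto.div_atTop (tendsto_const_nhds)
        exact Filter.tendsto_atTop_add_const_right _ 1 tendsto_natCast_atTop_atTop
      have hc2 : Filter.Tendsto (fun j => dist (Y (φ j)) a) Filter.atTop (nhds 0) :=
        tendsto_iff_dist_tendsto_zero.1 htends
      have := hc1.add hc2
      simpa using this
    exact squeeze_zero (fun j => dist_nonneg) hb1 hb2
  have hZtend : Filter.Tendsto (fun j => Z (φ j) i) Filter.atTop (nhds a) :=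
    tendsto_iff_dist_tendsto_zero.2 hdzero
  have hle : f i a ≤ 0 := by
    have h1 : Filter.Tendsto (fun j => Z (φ j) i) Filter.atTop (nhdsWithin a (cube n 1)) := by
      rw [tendsto_nhdsWithin_iff]
      exact ⟨hZtend, Filter.Eventually.of_forall fun j => hZ _ i⟩
    have h2 : Filter.Tendsto (fun j => f i (Z (φ j) i)) Filter.atTop (nhds (f i a)) :=
      (hf i a ha).tendsto.comp h1
    exact le_of_tendsto h2 (Filter.Eventually.of_forall fun j => hfZ _ i)
  linarith

def OpenIn {α : Type*} [TopologicalSpace α] (S U : Set α) : Prop := ∃ V, IsOpen V ∧ U = V ∩ S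

def PartitionBetween {α : Type*} [TopologicalSpace α] (S A B L : Set α) : Prop :=
  ∃ U W : Set α, OpenIn S U ∧ OpenIn S W ∧ A ⊆ U ∧ B ⊆ W ∧
    S = U ∪ L ∪ W ∧ Disjoint U L ∧ Disjoint U W ∧ Disjoint L W

lemma isClosed_faceNeg (n : ℕ) (B : ℝ) (i : Fin n) : IsClosed (faceNeg n B i) := by
  have : faceNeg n B i = cube n B ∩ (fun x : EuclideanSpace ℝ (Fin n) => x i) ⁻¹' {0} := by
    ext x; simp [faceNeg]
  rw [this]
  exact (isClosed_cube n B).inter (isClosed_singleton.preimage (EuclideanSpace.proj i).continuous)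

lemma isClosed_facePos (n : ℕ) (B : ℝ) (i : Fin n) : IsClosed (facePos n B i) := by
  have : facePos n B i = cube n B ∩ (fun x : EuclideanSpace ℝ (Fin n) => x i) ⁻¹' {B} := by
    ext x; simp [facePos]
  rw [this]
  exact (isClosed_cube n B).inter (isClosed_singleton.preimage (EuclideanSpace.proj i).continuous)

lemma faceNeg_nonempty (n : ℕ) (i : Fin n) : (faceNeg n 1 i).Nonempty := by
  refine ⟨(0 : EuclideanSpace ℝ (Fin n)), fun j => ?_, rfl⟩
  simp [Set.mem_Icc]

lemma facePos_nonempty (n : ℕ) (i : Fin n) : (facePos n 1 i).Nonempty := by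
  refine ⟨(WithLp.toLp 2 (fun k => if k = i then (1:ℝ) else 0) : EuclideanSpace ℝ (Fin n)), fun j => ?_, ?_⟩
  · show (if j = i then (1:ℝ) else 0) ∈ Set.Icc 0 1
    split <;> norm_num
  · show (if i = i then (1:ℝ) else 0) = 1
    rw [if_pos rfl]

theorem engelking (n : ℕ) (L : ℕ → Set (EuclideanSpace ℝ (Fin n)))
    (h0 : L 0 = cube n 1)
    (hclosed : ∀ i, i ≤ n → IsClosed (L i))
    (hdec : ∀ i, i < n → L (i + 1) ⊆ L i)
    (hpart : ∀ i, (hi : i < n) →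
      PartitionBetween (L i) (L i ∩ facePos n 1 ⟨i, hi⟩) (L i ∩ faceNeg n 1 ⟨i, hi⟩)
        (L (i + 1))) :
    (L n).Nonempty := by
  classical
  have pieces : ∀ i : Fin n, ∃ A B : Set (EuclideanSpace ℝ (Fin n)),
      IsClosed A ∧ IsClosed B ∧ (L (i : ℕ) = A ∪ B) ∧ (A ∩ B ⊆ L ((i : ℕ) + 1)) ∧
      (L (i : ℕ) ∩ facePos n 1 i ⊆ A) ∧ (L (i : ℕ) ∩ faceNeg n 1 i ⊆ B) ∧
      (A ∩ faceNeg n 1 i ∩ L (i : ℕ) ⊆ L ((i : ℕ) + 1)) ∧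
      (B ∩ facePos n 1 i ∩ L (i : ℕ) ⊆ L ((i : ℕ) + 1)) := by
    intro i
    obtain ⟨U, W, ⟨VU, hVU, hUeq⟩, ⟨VW, hVW, hWeq⟩, hAU, hBW, heq, dUL, dUW, dLW⟩ :=
      hpart (i : ℕ) i.isLt
    have hFi : (⟨(i : ℕ), i.isLt⟩ : Fin n) = i := Fin.eta i i.isLt
    rw [hFi] at hAU hBW
    refine ⟨L ((i : ℕ) + 1) ∪ U, L ((i : ℕ) + 1) ∪ W, ?_, ?_, ?_, ?_, ?_, ?_, ?_, ?_⟩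
    · -- closed: A = L i ∩ VWᶜ
      have hA : L ((i : ℕ) + 1) ∪ U = L (i : ℕ) ∩ VWᶜ := by
        apply Set.Subset.antisymm
        · intro x hx
          rcases hx with hx | hx
          · have hxL : x ∈ L (i : ℕ) := by rw [heq]; exact Or.inl (Or.inr hx)
            refine ⟨hxL, fun hxV => ?_⟩
            have hxW : x ∈ W := by rw [hWeq]; exact ⟨hxV, hxL⟩
            exact Set.disjoint_left.1 dLW hx hxW
          · have hxL : x ∈ L (i : ℕ) := by rw [heq]; exact Or.inl (Or.inl hx)
            refine ⟨hxL, fun hxV => ?_⟩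
            have hxW : x ∈ W := by rw [hWeq]; exact ⟨hxV, hxL⟩
            exact Set.disjoint_left.1 dUW hx hxW
        · intro x hx
          obtain ⟨hxL, hxV⟩ := hx
          rw [heq] at hxL
          rcases hxL with (hx1 | hx2) | hx3
          · exact Or.inr hx1
          · exact Or.inl hx2
          · exact absurd (hWeq ▸ hx3 : x ∈ VW ∩ L (i:ℕ)).1 hxV
      rw [hA]
      exact (hclosed _ (le_of_lt i.isLt)).inter hVW.isClosed_compl
    · have hB : L ((i : ℕ) + 1) ∪ W = L (i : ℕ) ∩ VUᶜ := by
        apply Set.Subset.antisymm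
        · intro x hx
          rcases hx with hx | hx
          · have hxL : x ∈ L (i : ℕ) := by rw [heq]; exact Or.inl (Or.inr hx)
            refine ⟨hxL, fun hxV => ?_⟩
            have hxU : x ∈ U := by rw [hUeq]; exact ⟨hxV, hxL⟩
            exact Set.disjoint_left.1 dUL hxU hx
          · have hxL : x ∈ L (i : ℕ) := by rw [heq]; exact Or.inr hx
            refine ⟨hxL, fun hxV => ?_⟩
            have hxU : x ∈ U := by rw [hUeq]; exact ⟨hxV, hxL⟩
            exact Set.disjoint_left.1 dUW hxU hx
        · intro x hx
          obtain ⟨hxL, hxV⟩ := hx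
          rw [heq] at hxL
          rcases hxL with (hx1 | hx2) | hx3
          · exact absurd (hUeq ▸ hx1 : x ∈ VU ∩ L (i:ℕ)).1 hxV
          · exact Or.inl hx2
          · exact Or.inr hx3
      rw [hB]
      exact (hclosed _ (le_of_lt i.isLt)).inter hVU.isClosed_compl
    · rw [heq]
      ext x
      simp only [Set.mem_union]
      tauto
    · intro x hx
      obtain ⟨hx1, hx2⟩ := hx
      rcases hx1 with h | h
      · exact h
      · rcases hx2 with h' | h'
        · exact h'
        · exact (Set.disjoint_left.1 dUW h h').elim
    · intro x hx
      exact Or.inr (hAU hx)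
    · intro x hx
      exact Or.inr (hBW hx)
    · intro x hx
      obtain ⟨⟨hxA, hxF⟩, hxL⟩ := hx
      rcases hxA with h | h
      · exact h
      · have hxW : x ∈ W := hBW ⟨hxL, hxF⟩
        exact (Set.disjoint_left.1 dUW h hxW).elim
    · intro x hx
      obtain ⟨⟨hxB, hxF⟩, hxL⟩ := hx
      rcases hxB with h | h
      · exact h
      · have hxU : x ∈ U := hAU ⟨hxL, hxF⟩
        exact (Set.disjoint_left.1 dUW hxU h).elim
  choose Af Bf hAc hBc hunion hinter hposs hnegs hAneg hBpos using pieces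
  set f : Fin n → EuclideanSpace ℝ (Fin n) → ℝ := fun i x =>
    Metric.infDist x (Bf i ∪ faceNeg n 1 i) - Metric.infDist x (Af i ∪ facePos n 1 i)
    with hfdef
  have hfc : ∀ i, ContinuousOn (f i) (cube n 1) := by
    intro i
    apply Continuous.continuousOn
    exact (Metric.continuous_infDist_pt _).sub (Metric.continuous_infDist_pt _)
  have hfpos : ∀ i x, x ∈ facePos n 1 i → 0 ≤ f i x := by
    intro i x hx
    have h2 : Metric.infDist x (Af i ∪ facePos n 1 i) = 0 :=
      Metric.infDist_zero_of_mem (Set.mem_union_right _ hx)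
    have h1 : 0 ≤ Metric.infDist x (Bf i ∪ faceNeg n 1 i) := Metric.infDist_nonneg
    simp only [hfdef]
    linarith
  have hfneg : ∀ i x, x ∈ faceNeg n 1 i → f i x ≤ 0 := by
    intro i x hx
    have h2 : Metric.infDist x (Bf i ∪ faceNeg n 1 i) = 0 :=
      Metric.infDist_zero_of_mem (Set.mem_union_right _ hx)
    have h1 : 0 ≤ Metric.infDist x (Af i ∪ facePos n 1 i) := Metric.infDist_nonneg
    simp only [hfdef]
    linarith
  obtain ⟨x, hx, hz⟩ := miranda n f hfc hfpos hfneg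
  have claim : ∀ j, j ≤ n → x ∈ L j := by
    intro j
    induction j with
    | zero => intro _; rw [h0]; exact hx
    | succ j ihj =>
      intro hj1
      have hjn : j < n := hj1
      have hxLj : x ∈ L j := ihj (le_of_lt hjn)
      set i : Fin n := ⟨j, hjn⟩ with hi
      have hiv : (i : ℕ) = j := rfl
      have hxAB : x ∈ Af i ∪ Bf i := by
        rw [← hunion i, hiv]
        exact hxLj
      have hziv := hz i
      rcases hxAB with hxA | hxB
      · have e2 : Metric.infDist x (Af i ∪ facePos n 1 i) = 0 :=
          Metric.infDist_zero_of_mem (Set.mem_union_left _ hxA)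
        have e1 : Metric.infDist x (Bf i ∪ faceNeg n 1 i) = 0 := by
          simp only [hfdef] at hziv
          linarith
        have hcl : IsClosed (Bf i ∪ faceNeg n 1 i) := (hBc i).union (isClosed_faceNeg n 1 i)
        have hne : (Bf i ∪ faceNeg n 1 i).Nonempty :=
          (faceNeg_nonempty n i).mono Set.subset_union_right
        have hmem : x ∈ Bf i ∪ faceNeg n 1 i :=
          (hcl.mem_iff_infDist_zero hne).2 e1
        rcases hmem with hB | hF
        · have := hinter i ⟨hxA, hB⟩
          rwa [hiv] at this
        · have := hAneg i ⟨⟨hxA, hF⟩, by rw [hiv]; exact hxLj⟩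
          rwa [hiv] at this
      · have e2 : Metric.infDist x (Bf i ∪ faceNeg n 1 i) = 0 :=
          Metric.infDist_zero_of_mem (Set.mem_union_left _ hxB)
        have e1 : Metric.infDist x (Af i ∪ facePos n 1 i) = 0 := by
          simp only [hfdef] at hziv
          linarith
        have hcl : IsClosed (Af i ∪ facePos n 1 i) := (hAc i).union (isClosed_facePos n 1 i)
        have hne : (Af i ∪ facePos n 1 i).Nonempty :=
          (facePos_nonempty n i).mono Set.subset_union_right
        have hmem : x ∈ Af i ∪ facePos n 1 i :=
          (hcl.mem_iff_infDist_zero hne).2 e1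
        rcases hmem with hA | hF
        · have := hinter i ⟨hA, hxB⟩
          rwa [hiv] at this
        · have := hBpos i ⟨⟨hxB, hF⟩, by rw [hiv]; exact hxLj⟩
          rwa [hiv] at this
  exact ⟨x, claim n le_rfl⟩


end Engel



open Set Metric EMetric
open scoped ENNReal NNReal

/-- Engelking's nested partitions lemma: if `Iⁿ = L₀ ⊇ L₁ ⊇ ⋯ ⊇ Lₙ` are closed sets
such that each `Lᵢ₊₁` is a partition of `Lᵢ` between `Lᵢ ∩ Fᵢ⁺` and `Lᵢ ∩ Fᵢ⁻`,
then `Lₙ ≠ ∅`. -/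
theorem stmt9 (n : ℕ) (L : ℕ → Set (EuclideanSpace ℝ (Fin n)))
    (h0 : L 0 = cube n 1)
    (hclosed : ∀ i, i ≤ n → IsClosed (L i))
    (hdec : ∀ i, i < n → L (i + 1) ⊆ L i)
    (hpart : ∀ i, (hi : i < n) →
      PartitionBetween (L i) (L i ∩ facePos n 1 ⟨i, hi⟩) (L i ∩ faceNeg n 1 ⟨i, hi⟩)
        (L (i + 1))) :
    (L n).Nonempty :=
  Engel.engelking n L h0 hclosed hdec hpart
end

section
/- If L is a partition of [0,B]^n between the opposite faces F^+ and F^-, and Q is a cover of [0,B]^n by closed axis-parallel subcubes of side length s from a grid decomposition, then M = ⋃{Q ∈ Q : Q ∩ L ≠ ∅} is a partition of [0,B]^n between F^+ ∖ M and F^- ∖ M; moreover if L is a c-partition (c > 2s·√n), then M is a (c − 2s√n)-partition of [0,B]^n between F^+ and F^-. -/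
open Set Metric EMetric
open scoped ENNReal NNReal

private lemma qs_closed (n : ℕ) (s : ℝ) (t : Fin n → ℕ) :
    IsClosed {x : EuclideanSpace ℝ (Fin n) | ∀ j, x j ∈ Set.Icc (s * t j) (s * (t j + 1))} := by
  have h : {x : EuclideanSpace ℝ (Fin n) | ∀ j, x j ∈ Set.Icc (s * t j) (s * (t j + 1))}
      = ⋂ j, (EuclideanSpace.proj (𝕜 := ℝ) j) ⁻¹' Set.Icc (s * t j) (s * (t j + 1)) := by
    ext x; simp [EuclideanSpace.proj]
  rw [h]
  exact isClosed_iInter fun j => isClosed_Icc.preimage (EuclideanSpace.proj j).continuous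

private lemma qs_edist {n : ℕ} {s : ℝ} (hs : 0 ≤ s) {t : Fin n → ℕ}
    {x y : EuclideanSpace ℝ (Fin n)}
    (hx : ∀ j, x j ∈ Set.Icc (s * t j) (s * (t j + 1)))
    (hy : ∀ j, y j ∈ Set.Icc (s * t j) (s * (t j + 1))) :
    edist x y ≤ ENNReal.ofReal (s * Real.sqrt n) := by
  rw [edist_dist]
  apply ENNReal.ofReal_le_ofReal
  rw [EuclideanSpace.dist_eq]
  have h1 : ∀ j, dist (x j) (y j) ^ 2 ≤ s ^ 2 := fun j => by
    obtain ⟨a1, a2⟩ := hx j; obtain ⟨b1, b2⟩ := hy j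
    rw [Real.dist_eq]
    have h : |x j - y j| ≤ s := by
      rw [abs_sub_le_iff]; constructor <;> linarith
    nlinarith [abs_nonneg (x j - y j)]
  calc Real.sqrt (∑ j, dist (x j) (y j) ^ 2)
      ≤ Real.sqrt (∑ _j : Fin n, s ^ 2) :=
        Real.sqrt_le_sqrt (Finset.sum_le_sum fun j _ => h1 j)
    _ = s * Real.sqrt n := by
        rw [Finset.sum_const, Finset.card_univ, Fintype.card_fin, nsmul_eq_mul,
          Real.sqrt_mul (by positivity), Real.sqrt_sq hs]; ring

private lemma qs_cover {n p : ℕ} {s B : ℝ} (hs : 0 < s) (hp : 0 < p) (hB : B = s * p)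
    {x : EuclideanSpace ℝ (Fin n)} (hx : x ∈ cube n B) :
    ∃ t : Fin n → ℕ, (∀ j, t j < p) ∧
      ∀ j, x j ∈ Set.Icc (s * t j) (s * (t j + 1)) := by
  refine ⟨fun j => min ⌊x j / s⌋₊ (p - 1),
    fun j => lt_of_le_of_lt (min_le_right _ _) (Nat.sub_lt hp one_pos), fun j => ?_⟩
  obtain ⟨h0, hBj⟩ := hx j
  have hdiv0 : 0 ≤ x j / s := div_nonneg h0 hs.le
  have hxs : s * (x j / s) = x j := by field_simp
  simp only [Set.mem_Icc]
  rcases le_or_gt ⌊x j / s⌋₊ (p - 1) with h | h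
  · rw [min_eq_left h]
    have hf1 : (⌊x j / s⌋₊ : ℝ) ≤ x j / s := Nat.floor_le hdiv0
    have hf2 : x j / s < (⌊x j / s⌋₊ : ℝ) + 1 := Nat.lt_floor_add_one _
    constructor <;> nlinarith
  · rw [min_eq_right h.le]
    have hfl : p ≤ ⌊x j / s⌋₊ := by omega
    have hple : (p : ℝ) ≤ x j / s := (Nat.le_floor_iff hdiv0).mp hfl
    have hcast : ((p - 1 : ℕ) : ℝ) = (p : ℝ) - 1 := by
      rw [Nat.cast_sub hp]; simp
    rw [hcast, hB] at *
    constructor <;> nlinarith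

/-- Fattening a partition of the cube by a grid of closed subcubes of side `s`:
`M = ⋃{Q ∈ 𝒬 : Q ∩ L ≠ ∅}` is a partition of `[0,B]^n` between `F⁺ ∖ M` and `F⁻ ∖ M`;
moreover, if `L` is a `c`-partition with `c > 2s√n`, then `M` is a `(c − 2s√n)`-partition
of `[0,B]^n` between `F⁺` and `F⁻`. -/
theorem stmt11 (n p : ℕ) (hn : 0 < n) (B s : ℝ) (hs : 0 < s) (hB : B = s * p)
    (L : Set (EuclideanSpace ℝ (Fin n)))
    (hL : PartitionBetween (cube n B) (facePos n B ⟨0, hn⟩) (faceNeg n B ⟨0, hn⟩) L)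
    (M : Set (EuclideanSpace ℝ (Fin n)))
    (hM : M = ⋃₀ {Q | ∃ t : Fin n → ℕ, (∀ j, t j < p) ∧
      Q = {x : EuclideanSpace ℝ (Fin n) | ∀ j, x j ∈ Set.Icc (s * t j) (s * (t j + 1))} ∧
      (Q ∩ L).Nonempty}) :
    PartitionBetween (cube n B) (facePos n B ⟨0, hn⟩ \ M) (faceNeg n B ⟨0, hn⟩ \ M) M ∧
    ∀ c : ℝ, 2 * s * Real.sqrt n < c →
      EPartitionBetween c (cube n B) (facePos n B ⟨0, hn⟩) (faceNeg n B ⟨0, hn⟩) L →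
      EPartitionBetween (c - 2 * s * Real.sqrt n) (cube n B)
        (facePos n B ⟨0, hn⟩) (faceNeg n B ⟨0, hn⟩) M := by
  obtain ⟨U, W, ⟨V, hVopen, hUeq⟩, ⟨V', hV'open, hWeq⟩, hFpU, hFnW, hcover, hUL, hUW, hLW⟩ := hL
  have hp : 0 < p := by
    rcases Nat.eq_zero_or_pos p with h0 | h
    · exfalso
      have hB0 : B = 0 := by simp [hB, h0]
      have hz : (0 : EuclideanSpace ℝ (Fin n)) ∈ cube n B := fun i => by
        simp [hB0, Set.mem_Icc, le_refl]
      have h1 : (0 : EuclideanSpace ℝ (Fin n)) ∈ facePos n B ⟨0, hn⟩ := ⟨hz, by simp [hB0]⟩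
      have h2 : (0 : EuclideanSpace ℝ (Fin n)) ∈ faceNeg n B ⟨0, hn⟩ := ⟨hz, by simp⟩
      exact (hUW.ne_of_mem (hFpU h1) (hFnW h2)) rfl
    · exact h
  have hSfin : Set.Finite {Q | ∃ t : Fin n → ℕ, (∀ j, t j < p) ∧
      Q = {x : EuclideanSpace ℝ (Fin n) | ∀ j, x j ∈ Set.Icc (s * t j) (s * (t j + 1))} ∧
      (Q ∩ L).Nonempty} := by
    apply Set.Finite.subset (Set.finite_range
      (fun u : Fin n → Fin p => {x : EuclideanSpace ℝ (Fin n) |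
        ∀ j, x j ∈ Set.Icc (s * ((u j : ℕ) : ℝ)) (s * (((u j : ℕ) : ℝ) + 1))}))
    rintro Q ⟨t, ht, rfl, -⟩
    exact ⟨fun j => ⟨t j, ht j⟩, rfl⟩
  have hMclosed : IsClosed M := by
    rw [hM, Set.sUnion_eq_biUnion]
    refine Set.Finite.isClosed_biUnion hSfin ?_
    rintro Q ⟨t, ht, rfl, -⟩
    exact qs_closed n s t
  have hUsub : U ⊆ cube n B := by rw [hUeq]; exact Set.inter_subset_right
  have hWsub : W ⊆ cube n B := by rw [hWeq]; exact Set.inter_subset_right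
  have hLsub : L ⊆ cube n B := fun y hy => by rw [hcover]; exact Or.inl (Or.inr hy)
  have hMsub : M ⊆ cube n B := by
    rw [hM]; rintro x ⟨Q, ⟨t, ht, rfl, -⟩, hxQ⟩
    intro i
    obtain ⟨h1, h2⟩ := hxQ i
    have hti : ((t i : ℝ) + 1) ≤ (p : ℝ) := by exact_mod_cast ht i
    have htn : (0 : ℝ) ≤ (t i : ℝ) := Nat.cast_nonneg _
    constructor
    · nlinarith
    · rw [hB]; nlinarith
  have hLM : L ⊆ M := by
    intro y hy
    obtain ⟨t, ht, hyQ⟩ := qs_cover hs hp hB (hLsub hy)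
    rw [hM]
    exact ⟨_, ⟨t, ht, rfl, ⟨y, hyQ, hy⟩⟩, hyQ⟩
  have hMnear : ∀ x ∈ M, ∃ y ∈ L, edist x y ≤ ENNReal.ofReal (s * Real.sqrt n) := by
    rw [hM]; rintro x ⟨Q, ⟨t, ht, rfl, y, hyQ, hyL⟩, hxQ⟩
    exact ⟨y, hyL, qs_edist hs.le hxQ hyQ⟩
  have hpart : ∀ A A' : Set (EuclideanSpace ℝ (Fin n)), A ⊆ U → A' ⊆ W →
      Disjoint A M → Disjoint A' M → PartitionBetween (cube n B) A A' M := by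
    intro A A' hA hA' hAM hA'M
    refine ⟨U \ M, W \ M,
      ⟨V ∩ Mᶜ, hVopen.inter hMclosed.isOpen_compl, by
        rw [hUeq]; ext x
        simp only [Set.mem_diff, Set.mem_inter_iff, Set.mem_compl_iff]; tauto⟩,
      ⟨V' ∩ Mᶜ, hV'open.inter hMclosed.isOpen_compl, by
        rw [hWeq]; ext x
        simp only [Set.mem_diff, Set.mem_inter_iff, Set.mem_compl_iff]; tauto⟩,
      fun a ha => ⟨hA ha, fun hm => hAM.ne_of_mem ha hm rfl⟩,
      fun a ha => ⟨hA' ha, fun hm => hA'M.ne_of_mem ha hm rfl⟩, ?_, ?_, ?_, ?_⟩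
    · ext x
      constructor
      · intro hx
        rw [hcover] at hx
        by_cases hm : x ∈ M
        · exact Or.inl (Or.inr hm)
        · rcases hx with (hU | hLx) | hW
          · exact Or.inl (Or.inl ⟨hU, hm⟩)
          · exact absurd (hLM hLx) hm
          · exact Or.inr ⟨hW, hm⟩
      · rintro ((⟨hU, -⟩ | hm) | ⟨hW, -⟩)
        · exact hUsub hU
        · exact hMsub hm
        · exact hWsub hW
    · exact Set.disjoint_sdiff_left
    · exact hUW.mono Set.diff_subset Set.diff_subset
    · exact Set.disjoint_sdiff_right
  refine ⟨hpart _ _ (fun a ha => hFpU ha.1) (fun a ha => hFnW ha.1)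
      Set.disjoint_sdiff_left Set.disjoint_sdiff_left, ?_⟩
  rintro c hc ⟨-, hLA, hLB⟩
  have hn' : (0 : ℝ) < Real.sqrt n := Real.sqrt_pos.mpr (by exact_mod_cast hn)
  have hsn : 0 < s * Real.sqrt n := by positivity
  have key : ∀ F : Set (EuclideanSpace ℝ (Fin n)), ENNReal.ofReal c < setD L F →
      (∀ a ∈ F, a ∉ M) ∧ ENNReal.ofReal (c - 2 * s * Real.sqrt n) < setD M F := by
    intro F hF
    have hedist : ∀ y ∈ L, ∀ a ∈ F, ENNReal.ofReal c < edist y a := by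
      intro y hy a ha
      refine hF.trans_le ?_
      unfold setD
      calc (⨅ x ∈ L, ⨅ b ∈ F, edist x b) ≤ ⨅ b ∈ F, edist y b := iInf₂_le y hy
        _ ≤ edist y a := iInf₂_le a ha
    constructor
    · intro a ha haM
      obtain ⟨y, hyL, hdy⟩ := hMnear a haM
      have h1 := hedist y hyL a ha
      rw [edist_comm] at hdy
      have h2 : ENNReal.ofReal c ≤ ENNReal.ofReal (s * Real.sqrt n) := (h1.trans_le hdy).le
      rw [ENNReal.ofReal_le_ofReal_iff hsn.le] at h2
      nlinarith
    · have hmid : ENNReal.ofReal (c - s * Real.sqrt n) ≤ setD M F := by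
        unfold setD
        refine le_iInf₂ fun x hx => le_iInf₂ fun a ha => ?_
        obtain ⟨y, hyL, hdy⟩ := hMnear x hx
        have h1 := hedist y hyL a ha
        have htri : edist y a ≤ edist x y + edist x a := by
          rw [edist_comm x y]; exact edist_triangle _ _ _
        have h2 : ENNReal.ofReal c < ENNReal.ofReal (s * Real.sqrt n) + edist x a :=
          h1.trans_le (htri.trans (add_le_add_left hdy _))
        rw [ENNReal.ofReal_sub _ hsn.le]
        exact tsub_le_iff_left.mpr h2.le
      refine lt_of_lt_of_le ?_ hmid
      rw [ENNReal.ofReal_lt_ofReal_iff (by nlinarith)]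
      nlinarith
  obtain ⟨hF1, hF2⟩ := key _ hLA
  obtain ⟨hG1, hG2⟩ := key _ hLB
  exact ⟨hpart _ _ hFpU hFnW (Set.disjoint_left.mpr fun {a} ha ham => hF1 a ha ham)
      (Set.disjoint_left.mpr fun {a} ha ham => hG1 a ha ham), hF2, hG2⟩
end

section
/- If L is a c-partition of a metric space X between A and B, and M ⊇ L is a set with M ⊆ N_s(L) (the s-neighborhood of L) where s < c, then there exists a decomposition witnessing that M contains the 'separating core': precisely, X ∖ M = U' ⊔ W' where U', W' are open, A ⊆ U', B ⊆ W' (assuming d(A,L) > c > s and d(B,L) > c > s), and M is a (c − s)-partition of X between A and B. -/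
open Set Metric EMetric
open scoped ENNReal NNReal

theorem setD_le_edist {α : Type*} [PseudoEMetricSpace α] {s t : Set α} {x y : α}
    (hx : x ∈ s) (hy : y ∈ t) : setD s t ≤ edist x y := by
  refine le_trans (iInf₂_le x hx) (iInf₂_le y hy)

/-- Enlarging a `c`-partition `L` of `X` between `A` and `B` to a closed set `M` with
`L ⊆ M ⊆ N_s(L)` (`s < c`) yields a `(c − s)`-partition of `X` between `A` and `B`. -/
theorem stmt17 {X : Type*} [MetricSpace X] (c s : ℝ) (hs : 0 < s) (hsc : s < c)
    (A B L M : Set X) (hAB : Disjoint A B)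
    (hL : EPartitionBetween c Set.univ A B L)
    (hLM : L ⊆ M) (hMs : M ⊆ Metric.thickening s L) (hMc : IsClosed M) :
    EPartitionBetween (c - s) Set.univ A B M := by
  obtain ⟨⟨U, W, ⟨V, hVopen, hUV⟩, ⟨V', hV'open, hWV'⟩, hAU, hBW, hcov, hUL, hUW, hLW⟩,
    hcA, hcB⟩ := hL
  have hU : IsOpen U := by rw [hUV, Set.inter_univ]; exact hVopen
  have hW : IsOpen W := by rw [hWV', Set.inter_univ]; exact hV'open
  -- key distance fact
  have key : ∀ T : Set X, ENNReal.ofReal c < setD L T →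
      (∀ t ∈ T, t ∉ M) ∧ ENNReal.ofReal (c - s) < setD M T := by
    intro T hT
    have hnot : ∀ t ∈ T, t ∉ M := by
      intro t ht htM
      obtain ⟨l, hl, hdl⟩ := Metric.mem_thickening_iff.mp (hMs htM)
      have h1 : setD L T ≤ edist l t := setD_le_edist hl ht
      have h2 : edist l t < ENNReal.ofReal s := by
        rw [edist_dist, dist_comm]
        exact ENNReal.ofReal_lt_ofReal_iff hs |>.mpr hdl
      have h3 : ENNReal.ofReal s < ENNReal.ofReal c :=
        (ENNReal.ofReal_lt_ofReal_iff (hs.trans hsc)).mpr hsc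
      exact absurd (h1.trans_lt (h2.trans (h3.trans hT))) (lt_irrefl _)
    refine ⟨hnot, ?_⟩
    have hlow : setD L T - ENNReal.ofReal s ≤ setD M T := by
      refine le_iInf₂ fun m hm => le_iInf₂ fun t ht => ?_
      obtain ⟨l, hl, hdl⟩ := Metric.mem_thickening_iff.mp (hMs hm)
      have h1 : setD L T ≤ edist l t := setD_le_edist hl ht
      have h2 : edist l t ≤ edist l m + edist m t := edist_triangle _ _ _
      have h3 : edist l m ≤ ENNReal.ofReal s := by
        rw [edist_dist, dist_comm]
        exact ENNReal.ofReal_le_ofReal hdl.le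
      refine tsub_le_iff_left.mpr ?_
      calc setD L T ≤ edist l m + edist m t := h1.trans h2
        _ ≤ ENNReal.ofReal s + edist m t := add_le_add h3 le_rfl
    refine lt_of_lt_of_le ?_ hlow
    rw [lt_tsub_iff_right, ← ENNReal.ofReal_add (by linarith) hs.le]
    have : c - s + s = c := by ring
    rw [this]
    exact hT
  obtain ⟨hAM, hcA'⟩ := key A hcA
  obtain ⟨hBM, hcB'⟩ := key B hcB
  refine ⟨⟨U \ M, W \ M, ⟨U ∩ Mᶜ, hU.inter hMc.isOpen_compl, by
      rw [Set.inter_univ]; rfl⟩, ⟨W ∩ Mᶜ, hW.inter hMc.isOpen_compl, by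
      rw [Set.inter_univ]; rfl⟩, ?_, ?_, ?_, ?_, ?_, ?_⟩, hcA', hcB'⟩
  · exact fun a ha => ⟨hAU ha, hAM a ha⟩
  · exact fun b hb => ⟨hBW hb, hBM b hb⟩
  · ext x
    simp only [Set.mem_univ, true_iff, Set.mem_union, Set.mem_diff]
    by_cases hxM : x ∈ M
    · exact Or.inl (Or.inr hxM)
    · have hx : x ∈ U ∪ L ∪ W := hcov ▸ Set.mem_univ x
      rcases hx with (hx | hx) | hx
      · exact Or.inl (Or.inl ⟨hx, hxM⟩)
      · exact absurd (hLM hx) hxM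
      · exact Or.inr ⟨hx, hxM⟩
  · exact Set.disjoint_left.mpr fun x hx => hx.2
  · exact Set.disjoint_left.mpr fun x hx hx' => Set.disjoint_left.mp hUW hx.1 hx'.1
  · exact Set.disjoint_left.mpr fun x hx hx' => hx'.2 hx
end
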